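/- arXiv:1007.4620 — 11 statements merged into one kernel-verified Lean document; each statement's English description precedes it below -/
import Mathlib

section
/- Let Γ be a finite connected simple graph with vertex set V and let 𝒯 be a maximal tubing of Γ. Then for every T ∈ 𝒯 ∪ {V}, there is exactly one vertex of T that is not contained in any element of 𝒯 properly contained in T. -/
set_option linter.unusedSectionVars false

variable {V : Type*} [Fintype V] [DecidableEq V]

/-- A tube of a simple graph: a nonempty proper subset of vertices whose
induced subgraph is connected. -/
def IsTube (G : SimpleGraph V) (T : Finset V) : Prop :=
  T.Nonempty ∧ T ≠ Finset.univ ∧ (G.induce (T : Set V)).Connected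

/-- A tubing: a set of tubes, pairwise either properly nested or disjoint with
no edge between them. -/
def IsTubing (G : SimpleGraph V) (𝒯 : Finset (Finset V)) : Prop :=
  (∀ T ∈ 𝒯, IsTube G T) ∧
  ∀ T ∈ 𝒯, ∀ T' ∈ 𝒯, T ≠ T' →
    T ⊂ T' ∨ T' ⊂ T ∨
      ((∀ v ∈ T, v ∉ T') ∧ ∀ u ∈ T, ∀ v ∈ T', ¬ G.Adj u v)

/-- A maximal tubing: one not properly contained in any other tubing. -/
def IsMaxTubing (G : SimpleGraph V) (𝒯 : Finset (Finset V)) : Prop :=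
  IsTubing G 𝒯 ∧ ∀ 𝒯' : Finset (Finset V), IsTubing G 𝒯' → 𝒯 ⊆ 𝒯' → 𝒯' = 𝒯

open SimpleGraph
open scoped Classical

private lemma reach_mono (G : SimpleGraph V) {S A : Set V} (h : S ⊆ A) {x y : S}
    (hr : (G.induce S).Reachable x y) :
    (G.induce A).Reachable ⟨x.1, h x.2⟩ ⟨y.1, h y.2⟩ := by
  let f : G.induce S →g G.induce A := ⟨fun a => ⟨a.1, h a.2⟩, fun hab => hab⟩
  exact hr.map f

private lemma frontier' (G : SimpleGraph V) {A : Set V} (hA : (G.induce A).Connected)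
    {S : Set V} {a b : V} (haA : a ∈ A) (hbA : b ∈ A) (haS : a ∈ S) (hbS : b ∉ S) :
    ∃ u x, u ∈ A ∧ x ∈ A ∧ u ∈ S ∧ x ∉ S ∧ G.Adj u x := by
  obtain ⟨p⟩ := hA.preconnected ⟨a, haA⟩ ⟨b, hbA⟩
  obtain ⟨d, _, h1, h2⟩ := p.exists_boundary_dart {x : A | (x : V) ∈ S} haS hbS
  exact ⟨d.fst, d.snd, d.fst.2, d.snd.2, h1, h2, d.adj⟩

private def comp (G : SimpleGraph V) (A : Set V) (v0 : A) : Set V :=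
  {x | ∃ h : x ∈ A, (G.induce A).Reachable v0 ⟨x, h⟩}

private lemma comp_walk (G : SimpleGraph V) (A : Set V) (v0 : A) :
    ∀ {a b : A} (_ : (G.induce A).Walk a b) (ha : (a : V) ∈ comp G A v0),
      ∃ hb : (b : V) ∈ comp G A v0,
        (G.induce (comp G A v0)).Reachable ⟨a, ha⟩ ⟨b, hb⟩ := by
  intro a b p
  induction p with
  | nil => exact fun ha => ⟨ha, Reachable.refl _⟩
  | @cons x y z h q ih =>
    intro ha
    obtain ⟨h1, h2⟩ := ha
    have hy : (y : V) ∈ comp G A v0 := ⟨y.2, h2.trans h.reachable⟩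
    obtain ⟨hb, hr⟩ := ih hy
    have hadj : (G.induce (comp G A v0)).Adj ⟨x, ⟨h1, h2⟩⟩ ⟨y, hy⟩ := h
    exact ⟨hb, hadj.reachable.trans hr⟩

theorem maximal_tubing_unique_free_vertex_in_tube
    (G : SimpleGraph V) (hG : G.Connected)
    (𝒯 : Finset (Finset V)) (h : IsMaxTubing G 𝒯) :
    ∀ T ∈ insert Finset.univ 𝒯,
      ∃! v, v ∈ T ∧ ∀ S ∈ 𝒯, S ⊂ T → v ∉ S := by
  obtain ⟨⟨htube, hpair⟩, hmax⟩ := h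
  intro T hT
  have hTconn : (G.induce (T : Set V)).Connected := by
    rcases Finset.mem_insert.mp hT with rfl | hT'
    · have huniv : ((Finset.univ : Finset V) : Set V) = Set.univ := by simp
      rw [huniv]
      exact (induceUnivIso G).connected_iff.mpr hG
    · exact (htube T hT').2.2
  have hTne : T.Nonempty := by
    rcases Finset.mem_insert.mp hT with rfl | hT'
    · have := hG.nonempty; exact Finset.univ_nonempty
    · exact (htube T hT').1
  -- Existence of a free vertex
  have hex : ∃ v, v ∈ T ∧ ∀ S ∈ 𝒯, S ⊂ T → v ∉ S := by
    by_contra hc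
    push_neg at hc
    obtain ⟨v0, hv0⟩ := hTne
    obtain ⟨S, hS𝒯, hST, hvS⟩ := hc v0 hv0
    set F := 𝒯.filter (fun S => S ⊂ T ∧ v0 ∈ S) with hF
    obtain ⟨M, hMF, hMmax⟩ : ∃ M ∈ F, ∀ x ∈ F, ¬ M < x := by
      obtain ⟨M, hM1, hM2⟩ := Finset.exists_maximal (s := F)
        ⟨S, by simp [hF, hS𝒯, hST, hvS]⟩
      exact ⟨M, hM1, fun x hx hlt => hlt.not_ge (hM2 hx hlt.le)⟩
    rw [hF, Finset.mem_filter] at hMF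
    obtain ⟨hM𝒯, hMT, hv0M⟩ := hMF
    obtain ⟨x0, hx0T, hx0M⟩ := Finset.exists_of_ssubset hMT
    obtain ⟨u, x, huT, hxT, huM, hxM, hadj⟩ :=
      frontier' G hTconn (S := (M : Set V))
        (Finset.mem_coe.mpr (hMT.subset hv0M)) (Finset.mem_coe.mpr hx0T)
        (Finset.mem_coe.mpr hv0M) (fun hh => hx0M (Finset.mem_coe.mp hh))
    obtain ⟨S'', hS''𝒯, hS''T, hxS''⟩ := hc x hxT
    have hne : M ≠ S'' := fun he => hxM (he ▸ hxS'')
    rcases hpair M hM𝒯 S'' hS''𝒯 hne with h1 | h2 | h3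
    · exact hMmax S'' (by simp [hF, hS''𝒯, hS''T, h1.subset hv0M]) h1
    · exact hxM (h2.subset hxS'')
    · exact h3.2 u huM x hxS'' hadj
  obtain ⟨v, hvT, hvfree⟩ := hex
  refine ⟨v, ⟨hvT, hvfree⟩, ?_⟩
  rintro w ⟨hwT, hwfree⟩
  by_contra hvw
  have hvw' : v ≠ w := fun he => hvw he.symm
  -- build a new tube: component of v in T minus w
  set A : Set V := ((T.erase w : Finset V) : Set V) with hA
  have hvA : v ∈ A := by simp [hA, Finset.mem_erase, hvw', hvT]
  set v0 : A := ⟨v, hvA⟩ with hv0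
  set C : Set V := comp G A v0 with hC
  have hCsubA : C ⊆ A := fun x hx => hx.1
  have hvC : v ∈ C := ⟨hvA, Reachable.refl _⟩
  set Cfin : Finset V := C.toFinset with hCfin
  have hmemC : ∀ x, x ∈ Cfin ↔ x ∈ C := fun x => Set.mem_toFinset
  have hCsubT : Cfin ⊆ T := fun x hx =>
    Finset.erase_subset w T (Finset.mem_coe.mp (hCsubA ((hmemC x).mp hx)))
  have hwC : w ∉ Cfin := by
    intro hw
    have := hCsubA ((hmemC w).mp hw)
    simp [hA, Finset.mem_erase] at this
  have hCT : Cfin ⊂ T := ⟨hCsubT, fun hsub => hwC (hsub hwT)⟩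
  -- C is a tube
  have hCtube : IsTube G Cfin := by
    refine ⟨⟨v, (hmemC v).mpr hvC⟩, ?_, ?_⟩
    · intro he
      exact hwC (he ▸ Finset.mem_univ w)
    · have hcoe : ((Cfin : Finset V) : Set V) = C := by
        ext x; simp [hmemC x]
      rw [hcoe, connected_iff]
      refine ⟨?_, ⟨⟨v, hvC⟩⟩⟩
      intro x y
      obtain ⟨hx1, hx2⟩ := x.2
      obtain ⟨hy1, hy2⟩ := y.2
      obtain ⟨px⟩ := hx2
      obtain ⟨py⟩ := hy2
      obtain ⟨_, rx⟩ := comp_walk G A v0 px hvC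
      obtain ⟨_, ry⟩ := comp_walk G A v0 py hvC
      exact rx.symm.trans ry
  -- C is not in 𝒯
  have hCnotin : Cfin ∉ 𝒯 := fun hin => hvfree Cfin hin hCT ((hmemC v).mpr hvC)
  -- compatibility of C with every S in 𝒯
  have hcompat : ∀ S ∈ 𝒯, S ≠ Cfin →
      Cfin ⊂ S ∨ S ⊂ Cfin ∨
        ((∀ a ∈ Cfin, a ∉ S) ∧ ∀ a ∈ Cfin, ∀ b ∈ S, ¬ G.Adj a b) := by
    intro S hS𝒯 _
    have hsub : S ⊂ T → Cfin ⊂ S ∨ S ⊂ Cfin ∨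
        ((∀ a ∈ Cfin, a ∉ S) ∧ ∀ a ∈ Cfin, ∀ b ∈ S, ¬ G.Adj a b) := by
      intro hST
      have hvS : v ∉ S := hvfree S hS𝒯 hST
      have hwS : w ∉ S := hwfree S hS𝒯 hST
      have hSA : (S : Set V) ⊆ A := by
        intro x hx
        have hxS := Finset.mem_coe.mp hx
        simp only [hA, Finset.coe_erase, Set.mem_diff, Set.mem_singleton_iff]
        exact ⟨Finset.mem_coe.mpr (hST.subset hxS), fun he => hwS (he ▸ hxS)⟩
      by_cases hint : ∃ x ∈ S, x ∈ C
      · obtain ⟨x, hxS, hxC⟩ := hint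
        right; left
        constructor
        · intro y hyS
          have hSconn := (htube S hS𝒯).2.2
          have hr := hSconn.preconnected ⟨x, hxS⟩ ⟨y, hyS⟩
          have hr' := reach_mono G hSA hr
          refine (hmemC y).mpr ⟨hSA hyS, ?_⟩
          exact hxC.2.trans hr'
        · intro hsub'
          exact hvS (hsub' ((hmemC v).mpr hvC))
      · push_neg at hint
        right; right
        constructor
        · intro a ha haS
          exact hint a haS ((hmemC a).mp ha)
        · intro a ha b hbS hadj
          have haC : a ∈ C := (hmemC a).mp ha
          have hbA : b ∈ A := hSA hbS
          have hadj' : (G.induce A).Adj ⟨a, haC.1⟩ ⟨b, hbA⟩ := hadj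
          have hbC : b ∈ C := ⟨hbA, haC.2.trans hadj'.reachable⟩
          exact hint b hbS hbC
    have hTS : S ⊂ T ∨ T ⊆ S ∨
        ((∀ a ∈ T, a ∉ S) ∧ ∀ a ∈ T, ∀ b ∈ S, ¬ G.Adj a b) := by
      rcases Finset.mem_insert.mp hT with rfl | hT'
      · left
        exact Finset.ssubset_univ_iff.mpr (htube S hS𝒯).2.1
      · by_cases hST : S = T
        · right; left; exact le_of_eq hST.symm
        · rcases hpair T hT' S hS𝒯 (Ne.symm hST) with h1 | h2 | h3
          · right; left; exact h1.subset
          · left; exact h2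
          · right; right; exact h3
    rcases hTS with h1 | h2 | h3
    · exact hsub h1
    · left; exact lt_of_lt_of_le hCT h2
    · right; right
      exact ⟨fun a ha => h3.1 a (hCsubT ha),
        fun a ha b hb => h3.2 a (hCsubT ha) b hb⟩
  -- insert C into 𝒯: still a tubing, contradiction with maximality
  have htubing' : IsTubing G (insert Cfin 𝒯) := by
    constructor
    · intro S hS
      rcases Finset.mem_insert.mp hS with rfl | hS'
      · exact hCtube
      · exact htube S hS'
    · intro T1 hT1 T2 hT2 hne
      rcases Finset.mem_insert.mp hT1 with rfl | hT1' <;>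
        rcases Finset.mem_insert.mp hT2 with h2 | hT2'
      · exact absurd h2.symm hne
      · exact hcompat T2 hT2' (fun he => hne he.symm)
      · subst h2
        rcases hcompat T1 hT1' hne with h1 | h2 | h3
        · right; left; exact h1
        · left; exact h2
        · right; right
          refine ⟨fun a ha hb => h3.1 a hb ha, fun a ha b hb hadj => h3.2 b hb a ha hadj.symm⟩
      · exact hpair T1 hT1' T2 hT2' hne
  have := hmax (insert Cfin 𝒯) htubing' (Finset.subset_insert _ _)
  exact hCnotin (this ▸ Finset.mem_insert_self Cfin 𝒯)
end

section
/- Let Γ be a finite connected simple graph with vertex set V and let 𝒯 be a maximal tubing of Γ. Counting the whole vertex set V as a tube, the assignment T ↦ v_T, sending each T ∈ 𝒯 ∪ {V} to the unique vertex v_T of T not contained in any element of 𝒯 properly contained in T, is a bijection from 𝒯 ∪ {V} onto V. -/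
variable {V : Type*} [Fintype V] [DecidableEq V]

/-- Compatibility of two tubes. -/
def Compat (G : SimpleGraph V) (A B : Finset V) : Prop :=
  A ⊂ B ∨ B ⊂ A ∨ ((∀ v ∈ A, v ∉ B) ∧ ∀ u ∈ A, ∀ v ∈ B, ¬ G.Adj u v)

lemma compat_symm {G : SimpleGraph V} {A B : Finset V} (h : Compat G A B) :
    Compat G B A := by
  rcases h with h | h | ⟨h1, h2⟩
  · exact Or.inr (Or.inl h)
  · exact Or.inl h
  · exact Or.inr (Or.inr ⟨fun x hx hx' => h1 x hx' hx,
      fun u hu x hx hadj => h2 x hx u hu hadj.symm⟩)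

lemma reach_of_induce {G : SimpleGraph V} {s : Set V} {a b : ↥s}
    (hab : (G.induce s).Reachable a b) :
    Relation.ReflTransGen (fun x y => x ∈ s ∧ y ∈ s ∧ G.Adj x y) a.1 b.1 := by
  obtain ⟨p⟩ := hab
  induction p with
  | nil => exact Relation.ReflTransGen.refl
  | @cons u x q hadj p ih =>
      exact Relation.ReflTransGen.head ⟨u.2, x.2, hadj⟩ ih

lemma induce_reach_of_chain {G : SimpleGraph V} {s : Set V} {a b : V}
    (h : Relation.ReflTransGen (fun x y => x ∈ s ∧ y ∈ s ∧ G.Adj x y) a b)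
    (ha : a ∈ s) : ∃ hb : b ∈ s, (G.induce s).Reachable ⟨a, ha⟩ ⟨b, hb⟩ := by
  induction h with
  | refl => exact ⟨ha, SimpleGraph.Reachable.refl _⟩
  | @tail b c hb step ih =>
      obtain ⟨hbs, hr⟩ := ih
      refine ⟨step.2.1, hr.trans (SimpleGraph.Adj.reachable ?_)⟩
      show (G.induce s).Adj ⟨b, hbs⟩ ⟨c, step.2.1⟩
      exact step.2.2

/-- In a maximal tubing, each tube (including the full vertex set) has at most
one vertex not contained in any properly smaller tube of the tubing. -/
lemma free_unique (G : SimpleGraph V) {𝒯 : Finset (Finset V)}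
    (h : IsMaxTubing G 𝒯) {T : Finset V} (hTmem : T ∈ insert Finset.univ 𝒯)
    {v w : V} (hv : v ∈ T) (hw : w ∈ T)
    (hvfree : ∀ S ∈ 𝒯, S ⊂ T → v ∉ S)
    (hwfree : ∀ S ∈ 𝒯, S ⊂ T → w ∉ S) : v = w := by
  classical
  by_contra hne
  set R : V → V → Prop := fun a b => a ∈ T.erase w ∧ b ∈ T.erase w ∧ G.Adj a b with hR
  have : DecidablePred (Relation.ReflTransGen R v) := Classical.decPred _
  set T' : Finset V := (T.erase w).filter (Relation.ReflTransGen R v) with hT'def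
  have hT'mem : ∀ x, x ∈ T' ↔ x ∈ T.erase w ∧ Relation.ReflTransGen R v x := by
    intro x; simp [hT'def]
  have hvT' : v ∈ T' :=
    (hT'mem v).2 ⟨Finset.mem_erase.2 ⟨hne, hv⟩, Relation.ReflTransGen.refl⟩
  have hT'sub : T' ⊆ T := fun x hx => Finset.mem_of_mem_erase ((hT'mem x).1 hx).1
  have hwT' : w ∉ T' := fun hx => (Finset.mem_erase.1 ((hT'mem w).1 hx).1).1 rfl
  have hclosure : ∀ x ∈ T', ∀ y ∈ T.erase w, G.Adj x y → y ∈ T' := by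
    intro x hx y hy hadj
    obtain ⟨hx1, hx2⟩ := (hT'mem x).1 hx
    exact (hT'mem y).2 ⟨hy, hx2.tail ⟨hx1, hy, hadj⟩⟩
  have hT'ssub : T' ⊂ T :=
    Finset.ssubset_def.2 ⟨hT'sub, fun hsub => hwT' (hsub hw)⟩
  -- T' is connected as an induced subgraph
  have hchainT' : ∀ x, Relation.ReflTransGen R v x →
      Relation.ReflTransGen
        (fun a b => a ∈ (T' : Set V) ∧ b ∈ (T' : Set V) ∧ G.Adj a b) v x := by
    intro x hx
    induction hx with
    | refl => exact Relation.ReflTransGen.refl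
    | @tail b c hvb step ih =>
        have hb : b ∈ T' := (hT'mem b).2 ⟨step.1, hvb⟩
        have hc : c ∈ T' := (hT'mem c).2 ⟨step.2.1, hvb.tail step⟩
        exact ih.tail ⟨Finset.mem_coe.2 hb, Finset.mem_coe.2 hc, step.2.2⟩
  have hvT's : v ∈ (T' : Set V) := Finset.mem_coe.2 hvT'
  have hT'conn : (G.induce (T' : Set V)).Connected := by
    rw [SimpleGraph.connected_iff]
    refine ⟨?_, ⟨⟨v, hvT's⟩⟩⟩
    have key : ∀ x : ↥(T' : Set V), (G.induce (T' : Set V)).Reachable ⟨v, hvT's⟩ x := by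
      intro x
      have hx : Relation.ReflTransGen R v x.1 :=
        ((hT'mem x.1).1 (Finset.mem_coe.1 x.2)).2
      obtain ⟨hb, hr⟩ := induce_reach_of_chain (hchainT' x.1 hx) hvT's
      have hxe : (⟨x.1, hb⟩ : ↥(T' : Set V)) = x := Subtype.ext rfl
      rwa [hxe] at hr
    exact fun x y => (key x).symm.trans (key y)
  have hT'tube : IsTube G T' :=
    ⟨⟨v, hvT'⟩, fun heq => hwT' (heq ▸ Finset.mem_univ w), hT'conn⟩
  -- T' is compatible with every tube of 𝒯
  have hcompat : ∀ S ∈ 𝒯, Compat G T' S := by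
    intro S hS
    by_cases hST : S = T
    · subst hST; exact Or.inl hT'ssub
    have htri : S ⊂ T ∨ T ⊂ S ∨
        ((∀ x ∈ T, x ∉ S) ∧ ∀ u ∈ T, ∀ x ∈ S, ¬ G.Adj u x) := by
      rcases Finset.mem_insert.1 hTmem with hTu | hT𝒯
      · subst hTu
        exact Or.inl (Finset.ssubset_univ_iff.2 (h.1.1 S hS).2.1)
      · rcases h.1.2 T hT𝒯 S hS (Ne.symm hST) with h1 | h1 | h1
        · exact Or.inr (Or.inl h1)
        · exact Or.inl h1
        · exact Or.inr (Or.inr h1)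
    rcases htri with hSsT | hTsS | ⟨hdisj, hnoadj⟩
    · -- S is properly inside T: either S lands inside T' or is separated from it
      have hvS : v ∉ S := hvfree S hS hSsT
      have hwS : w ∉ S := hwfree S hS hSsT
      have hSerase : S ⊆ T.erase w := fun x hx =>
        Finset.mem_erase.2 ⟨fun hxw => hwS (hxw ▸ hx), hSsT.1 hx⟩
      by_cases hinter : ∃ x ∈ S, x ∈ T'
      · obtain ⟨x0, hx0S, hx0T'⟩ := hinter
        have hSconn := (h.1.1 S hS).2.2
        have hSsubT' : S ⊆ T' := by
          intro y hy
          have hx0s : x0 ∈ (S : Set V) := Finset.mem_coe.2 hx0S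
          have hys : y ∈ (S : Set V) := Finset.mem_coe.2 hy
          have hreach : (G.induce (S : Set V)).Reachable ⟨x0, hx0s⟩ ⟨y, hys⟩ :=
            hSconn.preconnected _ _
          have hchain := reach_of_induce hreach
          have hchainR : Relation.ReflTransGen R x0 y := by
            refine Relation.ReflTransGen.mono ?_ _ _ hchain
            intro a b hab
            exact ⟨hSerase (Finset.mem_coe.1 hab.1),
              hSerase (Finset.mem_coe.1 hab.2.1), hab.2.2⟩
          exact (hT'mem y).2 ⟨hSerase hy, (((hT'mem x0).1 hx0T').2).trans hchainR⟩
        exact Or.inr (Or.inl (Finset.ssubset_def.2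
          ⟨hSsubT', fun hcon => hvS (hcon hvT')⟩))
      · push_neg at hinter
        refine Or.inr (Or.inr ⟨fun x hxT' hxS => hinter x hxS hxT', ?_⟩)
        intro u huT' x hxS hadj
        exact hinter x hxS (hclosure u huT' x (hSerase hxS) hadj)
    · exact Or.inl (hT'ssub.trans hTsS)
    · exact Or.inr (Or.inr ⟨fun x hx => hdisj x (hT'sub hx),
        fun u hu x hx => hnoadj u (hT'sub hu) x hx⟩)
  -- insert T' 𝒯 is a tubing, contradicting maximality
  have htub : IsTubing G (insert T' 𝒯) := by
    constructor
    · intro A hA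
      rcases Finset.mem_insert.1 hA with rfl | hA
      · exact hT'tube
      · exact h.1.1 A hA
    · intro A hA B hB hAB
      rcases Finset.mem_insert.1 hA with rfl | hA' <;>
        rcases Finset.mem_insert.1 hB with rfl | hB'
      · exact absurd rfl hAB
      · exact hcompat B hB'
      · exact compat_symm (hcompat A hA')
      · exact h.1.2 A hA' B hB' hAB
  have heq := h.2 (insert T' 𝒯) htub (Finset.subset_insert _ _)
  have hT'in : T' ∈ 𝒯 := heq ▸ Finset.mem_insert_self T' 𝒯
  exact hvfree T' hT'in hT'ssub hvT'

theorem maximal_tubing_tube_vertex_bijection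
    (G : SimpleGraph V) (hG : G.Connected)
    (𝒯 : Finset (Finset V)) (h : IsMaxTubing G 𝒯) :
    ∀ f : Finset V → V,
      (∀ T ∈ insert Finset.univ 𝒯, f T ∈ T ∧ ∀ S ∈ 𝒯, S ⊂ T → f T ∉ S) →
      Set.BijOn f (↑(insert Finset.univ 𝒯) : Set (Finset V)) Set.univ := by
  intro f hf
  refine ⟨fun _ _ => Set.mem_univ _, ?_, ?_⟩
  · -- injectivity
    intro A hA B hB hfe
    by_contra hne
    have hA' := Finset.mem_coe.1 hA
    have hB' := Finset.mem_coe.1 hB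
    have hfA := hf A hA'
    have hfB := hf B hB'
    rcases Finset.mem_insert.1 hA' with rfl | hA𝒯 <;>
      rcases Finset.mem_insert.1 hB' with rfl | hB𝒯
    · exact hne rfl
    · have hBss : B ⊂ Finset.univ := Finset.ssubset_univ_iff.2 (h.1.1 B hB𝒯).2.1
      exact hfA.2 B hB𝒯 hBss (by rw [hfe]; exact hfB.1)
    · have hAss : A ⊂ Finset.univ := Finset.ssubset_univ_iff.2 (h.1.1 A hA𝒯).2.1
      exact hfB.2 A hA𝒯 hAss (by rw [← hfe]; exact hfA.1)
    · rcases h.1.2 A hA𝒯 B hB𝒯 hne with hss | hss | ⟨hdisj, _⟩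
      · exact hfB.2 A hA𝒯 hss (by rw [← hfe]; exact hfA.1)
      · exact hfA.2 B hB𝒯 hss (by rw [hfe]; exact hfB.1)
      · exact hdisj (f A) hfA.1 (by rw [hfe]; exact hfB.1)
  · -- surjectivity
    intro x _
    classical
    have hne : ((insert Finset.univ 𝒯).filter (fun A => x ∈ A)).Nonempty :=
      ⟨Finset.univ, Finset.mem_filter.2 ⟨Finset.mem_insert_self _ _, Finset.mem_univ x⟩⟩
    obtain ⟨T, hT, hmin⟩ : ∃ T ∈ (insert Finset.univ 𝒯).filter (fun A => x ∈ A),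
        ∀ S ∈ (insert Finset.univ 𝒯).filter (fun A => x ∈ A), ¬ S < T := by
      obtain ⟨T, hT, hmin'⟩ := Finset.exists_minimal hne
      exact ⟨T, hT, fun S hS hlt => lt_irrefl S (lt_of_lt_of_le hlt (hmin' hS hlt.le))⟩
    have hTmem : T ∈ insert Finset.univ 𝒯 := (Finset.mem_filter.1 hT).1
    have hxT : x ∈ T := (Finset.mem_filter.1 hT).2
    have hxfree : ∀ S ∈ 𝒯, S ⊂ T → x ∉ S := by
      intro S hS hST hxS
      exact hmin S (Finset.mem_filter.2 ⟨Finset.mem_insert_of_mem hS, hxS⟩) hST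
    have hfT := hf T hTmem
    have hxeq := free_unique G h hTmem hxT hfT.1 hxfree hfT.2
    exact ⟨T, Finset.mem_coe.2 hTmem, hxeq.symm⟩
end

section
/- Every maximal tubing of a finite connected simple graph with m vertices consists of exactly m − 1 tubes. -/
variable {V : Type*} [Fintype V] [DecidableEq V]

/-- `v` is a vertex of `T` that is not covered by any tube of `𝒯` strictly inside `T`. -/
def Unc (𝒯 : Finset (Finset V)) (T : Finset V) (v : V) : Prop :=
  v ∈ T ∧ ∀ R ∈ 𝒯, R ⊂ T → v ∉ R

/-- A hom between induced subgraphs coming from an inclusion of vertex sets. -/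
def myIncHom (G : SimpleGraph V) {s t : Set V} (h : s ⊆ t) : G.induce s →g G.induce t where
  toFun := fun x => ⟨x.1, h x.2⟩
  map_rel' := fun ha => ha

/-- A walk from inside a set to outside it crosses an edge. -/
lemma cross_edge {W : Type*} {H : SimpleGraph W} (s : Set W) :
    ∀ {x y : W}, H.Walk x y → x ∈ s → y ∉ s →
      ∃ a b, H.Adj a b ∧ a ∈ s ∧ b ∉ s := by
  intro x y p
  induction p with
  | nil => intro hx hy; exact absurd hx hy
  | @cons u v w h p ih =>
    intro hx hy
    by_cases hv : v ∈ s
    · exact ih hv hy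
    · exact ⟨u, v, h, hx, hv⟩

/-- In a connected induced subgraph, any nonempty proper "part" has an edge leaving it. -/
lemma cross_edge_finset {G : SimpleGraph V} {T R : Finset V}
    (hTc : (G.induce (T : Set V)).Connected) {x y : V} (hxT : x ∈ T) (hyT : y ∈ T)
    (hx : x ∈ R) (hy : y ∉ R) :
    ∃ a b, G.Adj a b ∧ a ∈ T ∧ b ∈ T ∧ a ∈ R ∧ b ∉ R := by
  have hr := hTc.preconnected ⟨x, hxT⟩ ⟨y, hyT⟩
  obtain ⟨p⟩ := hr
  obtain ⟨a, b, hab, ha, hb⟩ :=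
    cross_edge {z : (T : Set V) | (z : V) ∈ R} p hx hy
  exact ⟨a, b, hab, a.2, b.2, ha, hb⟩

lemma exists_unc {G : SimpleGraph V} {𝒯 : Finset (Finset V)} (h𝒯 : IsTubing G 𝒯)
    {T : Finset V} (hTne : T.Nonempty) (hTc : (G.induce (T : Set V)).Connected) :
    ∃ v, Unc 𝒯 T v := by
  classical
  by_contra hc
  have hc' : ∀ v ∈ T, ∃ R ∈ 𝒯, R ⊂ T ∧ v ∈ R := by
    intro v hv
    by_contra hR
    push_neg at hR
    exact hc ⟨v, hv, hR⟩
  obtain ⟨v0, hv0⟩ := hTne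
  obtain ⟨R0, hR0𝒯, hR0T, _⟩ := hc' v0 hv0
  have hFne : (𝒯.filter (· ⊂ T)).Nonempty :=
    ⟨R0, Finset.mem_filter.mpr ⟨hR0𝒯, hR0T⟩⟩
  obtain ⟨R, hRF, hRmax⟩ := Finset.exists_max_image (𝒯.filter (· ⊂ T)) Finset.card hFne
  obtain ⟨hR𝒯, hRT⟩ := Finset.mem_filter.mp hRF
  obtain ⟨x, hxR⟩ := (h𝒯.1 R hR𝒯).1
  obtain ⟨y, hyT, hyR⟩ := Finset.exists_of_ssubset hRT
  obtain ⟨a, b, hab, haT, hbT, haR, hbR⟩ :=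
    cross_edge_finset hTc (hRT.1 hxR) hyT hxR hyR
  obtain ⟨R', hR'𝒯, hR'T, hbR'⟩ := hc' b hbT
  have hne : R ≠ R' := fun hEq => hbR (hEq ▸ hbR')
  rcases h𝒯.2 R hR𝒯 R' hR'𝒯 hne with hss | hss | ⟨_, hnoedge⟩
  · have hR'F : R' ∈ 𝒯.filter (· ⊂ T) := Finset.mem_filter.mpr ⟨hR'𝒯, hR'T⟩
    exact absurd (hRmax R' hR'F) (not_le_of_gt (Finset.card_lt_card hss))
  · exact hbR (hss.1 hbR')
  · exact hnoedge a haR b hbR' hab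

lemma unc_unique {G : SimpleGraph V} {𝒯 : Finset (Finset V)} (h : IsMaxTubing G 𝒯)
    {T : Finset V} (hT : T ∈ 𝒯 ∨ T = Finset.univ) {u u' : V}
    (hu : Unc 𝒯 T u) (hu' : Unc 𝒯 T u') : u = u' := by
  classical
  by_contra hne
  -- maximal children of T
  set MaxCh : Finset V → Prop :=
    fun C => C ∈ 𝒯 ∧ C ⊂ T ∧ ∀ R ∈ 𝒯, R ⊂ T → ¬ C ⊂ R with hMaxCh
  have hexmax : ∀ R ∈ 𝒯, R ⊂ T → ∃ C, MaxCh C ∧ R ⊆ C := by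
    intro R hR𝒯 hRT
    have hFne : (𝒯.filter (fun C => C ⊂ T ∧ R ⊆ C)).Nonempty :=
      ⟨R, Finset.mem_filter.mpr ⟨hR𝒯, hRT, le_refl R⟩⟩
    obtain ⟨C, hCF, hCmax⟩ :=
      Finset.exists_max_image (𝒯.filter (fun C => C ⊂ T ∧ R ⊆ C)) Finset.card hFne
    obtain ⟨hC𝒯, hCT, hRC⟩ := Finset.mem_filter.mp hCF
    refine ⟨C, ⟨hC𝒯, hCT, ?_⟩, hRC⟩
    intro R' hR'𝒯 hR'T hCR'
    have hR'F : R' ∈ 𝒯.filter (fun C => C ⊂ T ∧ R ⊆ C) :=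
      Finset.mem_filter.mpr ⟨hR'𝒯, hR'T, hRC.trans hCR'.subset⟩
    exact absurd (hCmax R' hR'F) (not_le_of_gt (Finset.card_lt_card hCR'))
  -- distinct maximal children are disjoint with no edges
  have hdisj : ∀ C C', MaxCh C → MaxCh C' → C ≠ C' →
      (∀ v ∈ C, v ∉ C') ∧ ∀ a ∈ C, ∀ b ∈ C', ¬ G.Adj a b := by
    intro C C' hC hC' hCC'
    rcases h.1.2 C hC.1 C' hC'.1 hCC' with hss | hss | hd
    · exact absurd hss (hC.2.2 C' hC'.1 hC'.2.1)
    · exact absurd hss (hC'.2.2 C hC.1 hC.2.1)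
    · exact hd
  -- selected children: maximal children adjacent to u
  set Sel : Finset V → Prop := fun C => MaxCh C ∧ ∃ c ∈ C, G.Adj u c with hSel
  set S : Finset V := T.filter (fun x => x = u ∨ ∃ C, Sel C ∧ x ∈ C) with hS
  have huS : u ∈ S := Finset.mem_filter.mpr ⟨hu.1, Or.inl rfl⟩
  have hST : S ⊆ T := Finset.filter_subset _ _
  have hu'S : u' ∉ S := by
    intro hmem
    rcases (Finset.mem_filter.mp hmem).2 with hEq | ⟨C, hC, hu'C⟩
    · exact hne hEq.symm
    · exact hu'.2 C hC.1.1 hC.1.2.1 hu'C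
  have hselsub : ∀ C, Sel C → (C : Set V) ⊆ (S : Set V) := by
    intro C hC x hx
    have hx' : x ∈ C := hx
    exact Finset.mem_filter.mpr ⟨hC.1.2.1.1 hx', Or.inr ⟨C, hC, hx'⟩⟩
  have hSsT : S ⊂ T := ⟨hST, fun hTS => hu'S (hTS hu'.1)⟩
  -- S is connected
  have hSconn : (G.induce (S : Set V)).Connected := by
    have hreach : ∀ x : (S : Set V), (G.induce (S : Set V)).Reachable x ⟨u, huS⟩ := by
      rintro ⟨x, hx⟩
      have hx' : x ∈ S := hx
      rcases (Finset.mem_filter.mp hx').2 with hEq | ⟨C, hC, hxC⟩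
      · subst hEq; rfl
      · obtain ⟨c, hcC, hadj⟩ := hC.2
        have hCconn := (h.1.1 C hC.1.1).2.2
        have hr1 : (G.induce (C : Set V)).Reachable ⟨x, hxC⟩ ⟨c, hcC⟩ :=
          hCconn.preconnected _ _
        have hr2 := hr1.map (myIncHom G (hselsub C hC))
        have hedge : (G.induce (S : Set V)).Adj
            ⟨c, hselsub C hC hcC⟩ ⟨u, huS⟩ := hadj.symm
        exact hr2.trans hedge.reachable
    have : Nonempty ((S : Set V)) := ⟨⟨u, huS⟩⟩
    exact SimpleGraph.Connected.mk fun x y => (hreach x).trans (hreach y).symm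
  have hStube : IsTube G S := by
    refine ⟨⟨u, huS⟩, ?_, hSconn⟩
    intro hEq
    exact hu'S (hEq ▸ Finset.mem_univ u')
  -- compatibility of S with every tube of 𝒯
  have hcompat : ∀ R ∈ 𝒯, S ⊂ R ∨ R ⊂ S ∨
      ((∀ v ∈ S, v ∉ R) ∧ ∀ a ∈ S, ∀ b ∈ R, ¬ G.Adj a b) := by
    intro R hR𝒯
    by_cases hRT : R ⊂ T
    · obtain ⟨C, hC, hRC⟩ := hexmax R hR𝒯 hRT
      by_cases hCsel : Sel C
      · -- R ⊆ C ⊆ S, and u ∈ S ∖ R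
        refine Or.inr (Or.inl ⟨fun x hx => hselsub C hCsel (hRC hx), fun hSR => ?_⟩)
        exact hu.2 R hR𝒯 hRT (hSR huS)
      · refine Or.inr (Or.inr ⟨?_, ?_⟩)
        · intro v hvS hvR
          rcases (Finset.mem_filter.mp hvS).2 with hEq | ⟨C', hC', hvC'⟩
          · exact hu.2 R hR𝒯 hRT (hEq ▸ hvR)
          · have hCC' : C' ≠ C := fun hEq => hCsel (hEq ▸ hC')
            exact (hdisj C' C hC'.1 hC hCC').1 v hvC' (hRC hvR)
        · intro a haS b hbR hab
          rcases (Finset.mem_filter.mp haS).2 with hEq | ⟨C', hC', haC'⟩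
          · exact hCsel ⟨hC, b, hRC hbR, hEq ▸ hab⟩
          · have hCC' : C' ≠ C := fun hEq => hCsel (hEq ▸ hC')
            exact (hdisj C' C hC'.1 hC hCC').2 a haC' b (hRC hbR) hab
    · -- R is not strictly inside T
      have hT𝒯 : T ∈ 𝒯 := by
        rcases hT with hT | hT
        · exact hT
        · exfalso
          exact hRT (hT ▸ Finset.ssubset_univ_iff.mpr (h.1.1 R hR𝒯).2.1)
      by_cases hRTeq : R = T
      · exact Or.inl (hRTeq ▸ hSsT)
      · rcases h.1.2 R hR𝒯 T hT𝒯 hRTeq with hss | hss | ⟨hd, hnoedge⟩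
        · exact absurd hss hRT
        · exact Or.inl (hSsT.trans hss)
        · refine Or.inr (Or.inr ⟨?_, ?_⟩)
          · intro v hvS hvR
            exact hd v hvR (hST hvS)
          · intro a haS b hbR hab
            exact hnoedge b hbR a (hST haS) hab.symm
  have hSnotin : S ∉ 𝒯 := by
    intro hS𝒯
    exact hu.2 S hS𝒯 hSsT huS
  -- the bigger tubing
  have htubing : IsTubing G (insert S 𝒯) := by
    constructor
    · intro R hR
      rcases Finset.mem_insert.mp hR with rfl | hR
      · exact hStube
      · exact h.1.1 R hR
    · intro T1 hT1 T2 hT2 hT12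
      rcases Finset.mem_insert.mp hT1 with rfl | hT1 <;>
        rcases Finset.mem_insert.mp hT2 with rfl | hT2
      · exact absurd rfl hT12
      · exact hcompat T2 hT2
      · rcases hcompat T1 hT1 with hss | hss | ⟨hd, hnoedge⟩
        · exact Or.inr (Or.inl hss)
        · exact Or.inl hss
        · refine Or.inr (Or.inr ⟨fun v hv1 hv2 => hd v hv2 hv1,
            fun a ha b hb hab => hnoedge b hb a ha hab.symm⟩)
      · exact h.1.2 T1 hT1 T2 hT2 hT12
  have heq := h.2 (insert S 𝒯) htubing (Finset.subset_insert S 𝒯)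
  exact hSnotin (heq ▸ Finset.mem_insert_self S 𝒯)

theorem maximal_tubing_card
    (G : SimpleGraph V) (hG : G.Connected)
    (𝒯 : Finset (Finset V)) (h : IsMaxTubing G 𝒯) :
    𝒯.card = Fintype.card V - 1 := by
  classical
  have hVne : Nonempty V := hG.nonempty
  set 𝒮 : Finset (Finset V) := insert Finset.univ 𝒯 with h𝒮
  have hUnotin : Finset.univ ∉ 𝒯 := fun hmem => (h.1.1 _ hmem).2.1 rfl
  have huconn : (G.induce ((Finset.univ : Finset V) : Set V)).Connected := by
    rw [Finset.coe_univ]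
    exact (SimpleGraph.induceUnivIso G).connected_iff.mpr hG
  have hmem𝒮 : ∀ T ∈ 𝒮, T ∈ 𝒯 ∨ T = Finset.univ := by
    intro T hT
    rcases Finset.mem_insert.mp hT with hT | hT
    · exact Or.inr hT
    · exact Or.inl hT
  -- existence of an uncovered vertex for each member of 𝒮
  have hex : ∀ T, ∃ v, T ∈ 𝒮 → Unc 𝒯 T v := by
    intro T
    by_cases hT : T ∈ 𝒮
    · rcases hmem𝒮 T hT with hT' | hT'
      · obtain ⟨v, hv⟩ := exists_unc h.1 (h.1.1 T hT').1 (h.1.1 T hT').2.2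
        exact ⟨v, fun _ => hv⟩
      · subst hT'
        obtain ⟨v, hv⟩ := exists_unc h.1 Finset.univ_nonempty huconn
        exact ⟨v, fun _ => hv⟩
    · exact ⟨Classical.arbitrary V, fun hmem => absurd hmem hT⟩
  choose f hf using hex
  -- each vertex has a minimal member of 𝒮 containing it, where it is uncovered
  have hex2 : ∀ v : V, ∃ T, T ∈ 𝒮 ∧ Unc 𝒯 T v := by
    intro v
    have hFne : (𝒮.filter (v ∈ ·)).Nonempty :=
      ⟨Finset.univ, Finset.mem_filter.mpr ⟨Finset.mem_insert_self _ _, Finset.mem_univ v⟩⟩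
    obtain ⟨T, hTF, hTmin⟩ := Finset.exists_min_image (𝒮.filter (v ∈ ·)) Finset.card hFne
    obtain ⟨hT𝒮, hvT⟩ := Finset.mem_filter.mp hTF
    refine ⟨T, hT𝒮, hvT, ?_⟩
    intro R hR𝒯 hRT hvR
    have hRF : R ∈ 𝒮.filter (v ∈ ·) :=
      Finset.mem_filter.mpr ⟨Finset.mem_insert_of_mem hR𝒯, hvR⟩
    exact absurd (hTmin R hRF) (not_le_of_gt (Finset.card_lt_card hRT))
  choose g hg using hex2
  -- two vertices uncovered in the same T coincide, T arbitrary member of 𝒮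
  -- card 𝒮 ≤ card V
  have hcard1 : 𝒮.card ≤ (Finset.univ : Finset V).card := by
    apply Finset.card_le_card_of_injOn f (fun _ _ => Finset.mem_univ _)
    intro T1 hT1 T2 hT2 hf12
    have hT1' : T1 ∈ 𝒮 := hT1
    have hT2' : T2 ∈ 𝒮 := hT2
    have hu1 := hf T1 hT1'
    have hu2 := hf T2 hT2'
    rw [hf12] at hu1
    by_contra hne
    -- v := f T2 is in both
    rcases hmem𝒮 T1 hT1' with h1 | h1 <;> rcases hmem𝒮 T2 hT2' with h2 | h2
    · rcases h.1.2 T1 h1 T2 h2 hne with hss | hss | ⟨hd, _⟩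
      · exact hu2.2 T1 h1 hss hu1.1
      · exact hu1.2 T2 h2 hss hu2.1
      · exact hd _ hu1.1 hu2.1
    · exact hu2.2 T1 h1 (h2 ▸ Finset.ssubset_univ_iff.mpr
        ((h.1.1 T1 h1).2.1)) hu1.1
    · exact hu1.2 T2 h2 (h1 ▸ Finset.ssubset_univ_iff.mpr
        ((h.1.1 T2 h2).2.1)) hu2.1
    · exact hne (h1.trans h2.symm)
  have hcard2 : (Finset.univ : Finset V).card ≤ 𝒮.card := by
    apply Finset.card_le_card_of_injOn g (fun v _ => (hg v).1)
    intro v1 _ v2 _ hg12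
    have h1 := (hg v1).2
    have h2 := (hg v2).2
    rw [hg12] at h1
    exact unc_unique h (hmem𝒮 _ (hg v2).1) h1 h2
  have hcard : 𝒮.card = Fintype.card V := by
    rw [← Finset.card_univ]
    exact le_antisymm hcard1 hcard2
  have : 𝒯.card + 1 = Fintype.card V := by
    rw [← hcard, h𝒮, Finset.card_insert_of_notMem hUnotin]
  omega
end

section
/- If a tubing of a finite connected simple graph with m vertices contains exactly m − 1 tubes, then it is a maximal tubing. -/
variable {V : Type*} [Fintype V] [DecidableEq V]

/-- From a walk in an induced subgraph starting inside `S` and ending outside `S`,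
extract a crossing edge. -/
private lemma cross_of_walk {G : SimpleGraph V} {s : Set V} (S : Finset V) :
    ∀ {a b : s}, (G.induce s).Walk a b → a.1 ∈ S → b.1 ∉ S →
    ∃ u ∈ S, ∃ w, w ∈ s ∧ w ∉ S ∧ G.Adj u w := by
  intro a b p
  induction p with
  | nil => intro ha hb; exact absurd ha hb
  | @cons x y z h q ih =>
    intro ha hb
    by_cases hy : y.1 ∈ S
    · exact ih hy hb
    · exact ⟨x.1, ha, y.1, y.2, hy, h⟩

/-- In a tubing, every connected set `T` has a vertex not covered by any tube
properly contained in `T`. -/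
private lemma exists_free {G : SimpleGraph V} {𝒯 : Finset (Finset V)}
    (h𝒯 : IsTubing G 𝒯) {T : Finset V} (hTne : T.Nonempty)
    (hTconn : (G.induce (T : Set V)).Connected) :
    ∃ v ∈ T, ∀ S ∈ 𝒯, S ⊂ T → v ∉ S := by
  classical
  by_contra hcon
  push_neg at hcon
  obtain ⟨v₀, hv₀⟩ := hTne
  have hne : (𝒯.filter (fun S => S ⊂ T ∧ v₀ ∈ S)).Nonempty := by
    obtain ⟨S, hS, hST, hvS⟩ := hcon v₀ hv₀
    exact ⟨S, Finset.mem_filter.mpr ⟨hS, hST, hvS⟩⟩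
  obtain ⟨S, hSmem, hSmax⟩ := Finset.exists_max_image _ Finset.card hne
  obtain ⟨hS𝒯, hST, hv₀S⟩ := Finset.mem_filter.mp hSmem
  obtain ⟨w₀, hw₀T, hw₀S⟩ := Finset.exists_of_ssubset hST
  have hv₀T : v₀ ∈ (T : Set V) := hST.1 hv₀S
  have hw₀T' : w₀ ∈ (T : Set V) := hw₀T
  obtain ⟨p⟩ := hTconn.preconnected ⟨v₀, hv₀T⟩ ⟨w₀, hw₀T'⟩
  obtain ⟨u, huS, w, hwT, hwS, hadj⟩ := cross_of_walk S p hv₀S hw₀S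
  obtain ⟨S', hS'𝒯, hS'T, hwS'⟩ := hcon w hwT
  have hSS' : S ≠ S' := fun h => hwS (h ▸ hwS')
  rcases h𝒯.2 S hS𝒯 S' hS'𝒯 hSS' with h1 | h2 | ⟨_, hnoedge⟩
  · have : S' ∈ 𝒯.filter (fun S => S ⊂ T ∧ v₀ ∈ S) :=
      Finset.mem_filter.mpr ⟨hS'𝒯, hS'T, h1.1 hv₀S⟩
    exact absurd (hSmax S' this) (not_le.mpr (Finset.card_lt_card h1))
  · exact hwS (h2.1 hwS')
  · exact hnoedge u huS w hwS' hadj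

/-- Any tubing of a connected graph has at most `|V| - 1` tubes. -/
private lemma tubing_card_succ_le {G : SimpleGraph V} (hG : G.Connected)
    {𝒯 : Finset (Finset V)} (h : IsTubing G 𝒯) :
    𝒯.card + 1 ≤ Fintype.card V := by
  classical
  have hVne : Nonempty V := hG.nonempty
  have huniv_conn : (G.induce ((Finset.univ : Finset V) : Set V)).Connected := by
    rw [Finset.coe_univ]
    exact ((SimpleGraph.induceUnivIso G).connected_iff).mpr hG
  have hchoice : ∀ T : Finset V, ∃ v : V,
      T ∈ insert Finset.univ 𝒯 → v ∈ T ∧ ∀ S ∈ 𝒯, S ⊂ T → v ∉ S := by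
    intro T
    by_cases hT : T ∈ insert Finset.univ 𝒯
    · rcases Finset.mem_insert.mp hT with rfl | hT'
      · obtain ⟨v, hv1, hv2⟩ := exists_free h Finset.univ_nonempty huniv_conn
        exact ⟨v, fun _ => ⟨hv1, hv2⟩⟩
      · obtain ⟨hne, _, hconn⟩ := h.1 T hT'
        obtain ⟨v, hv1, hv2⟩ := exists_free h hne hconn
        exact ⟨v, fun _ => ⟨hv1, hv2⟩⟩
    · exact ⟨Classical.arbitrary V, fun hmem => absurd hmem hT⟩
  choose f hf using hchoice
  have hinj : Set.InjOn f ↑(insert Finset.univ 𝒯) := by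
    intro T₁ hT₁ T₂ hT₂ hfeq
    by_contra hne
    have hT₁' := Finset.mem_coe.mp hT₁
    have hT₂' := Finset.mem_coe.mp hT₂
    obtain ⟨hm₁, hfree₁⟩ := hf T₁ hT₁'
    obtain ⟨hm₂, hfree₂⟩ := hf T₂ hT₂'
    rcases Finset.mem_insert.mp hT₁' with rfl | hT₁𝒯
    · rcases Finset.mem_insert.mp hT₂' with rfl | hT₂𝒯
      · exact hne rfl
      · have hss : T₂ ⊂ Finset.univ :=
          Finset.ssubset_univ_iff.mpr (h.1 T₂ hT₂𝒯).2.1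
        exact hfree₁ T₂ hT₂𝒯 hss (hfeq ▸ hm₂)
    · rcases Finset.mem_insert.mp hT₂' with rfl | hT₂𝒯
      · have hss : T₁ ⊂ Finset.univ :=
          Finset.ssubset_univ_iff.mpr (h.1 T₁ hT₁𝒯).2.1
        exact hfree₂ T₁ hT₁𝒯 hss (hfeq ▸ hm₁)
      · rcases h.2 T₁ hT₁𝒯 T₂ hT₂𝒯 hne with h1 | h2 | ⟨hdisj, _⟩
        · exact hfree₂ T₁ hT₁𝒯 h1 (hfeq ▸ hm₁)
        · exact hfree₁ T₂ hT₂𝒯 h2 (hfeq ▸ hm₂)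
        · exact hdisj (f T₁) hm₁ (hfeq ▸ hm₂)
  have hnotmem : (Finset.univ : Finset V) ∉ 𝒯 := fun hmem =>
    (h.1 _ hmem).2.1 rfl
  have hcardle : (insert Finset.univ 𝒯).card ≤ Fintype.card V := by
    have := Finset.card_le_card_of_injOn f
      (fun T _ => Finset.mem_univ (f T)) hinj
    simpa using this
  rw [Finset.card_insert_of_notMem hnotmem] at hcardle
  omega

theorem tubing_of_card_pred_is_maximal
    (G : SimpleGraph V) (hG : G.Connected)
    (𝒯 : Finset (Finset V)) (h : IsTubing G 𝒯)
    (hcard : 𝒯.card = Fintype.card V - 1) :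
    IsMaxTubing G 𝒯 := by
  refine ⟨h, fun 𝒯' h' hsub => ?_⟩
  refine (Finset.eq_of_subset_of_card_le hsub ?_).symm
  have h1 := tubing_card_succ_le hG h'
  omega
end

section
/- Let Γ be a finite connected simple graph with at least two vertices and let 𝒯 be a maximal tubing of Γ. Then there is exactly one vertex of Γ that is contained in no tube of 𝒯. -/
variable {V : Type*} [Fintype V] [DecidableEq V]

private lemma walk_mem_closed {G : SimpleGraph V} {K : Set V}
    (hcl : ∀ a b, a ∈ K → G.Adj a b → b ∈ K) :
    ∀ {a b : V}, G.Walk a b → a ∈ K → b ∈ K := by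
  intro a b p
  induction p with
  | nil => exact id
  | cons h _ ih => exact fun ha => ih (hcl _ _ ha h)

private lemma reachable_induce_mono {G : SimpleGraph V} {s t : Set V} (h : s ⊆ t)
    {x y : V} (hx : x ∈ s) (hy : y ∈ s)
    (hr : (G.induce s).Reachable ⟨x, hx⟩ ⟨y, hy⟩) :
    (G.induce t).Reachable ⟨x, h hx⟩ ⟨y, h hy⟩ :=
  hr.map (G.induceHomOfLE h).toHom

private lemma comp_reach {G : SimpleGraph V} {S : Set V} {v : V} (hv : v ∈ S)
    (C : Set V)
    (hC : ∀ x, x ∈ C ↔ ∃ hx : x ∈ S, (G.induce S).Reachable ⟨v, hv⟩ ⟨x, hx⟩) :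
    ∀ (a b : S), (G.induce S).Walk a b → ∀ ha : a.1 ∈ C, ∃ hb : b.1 ∈ C,
      (G.induce C).Reachable ⟨a.1, ha⟩ ⟨b.1, hb⟩ := by
  intro a b p
  induction p with
  | nil => exact fun ha => ⟨ha, SimpleGraph.Reachable.refl _⟩
  | @cons a b c hab p ih =>
    intro ha
    have hGab : G.Adj a.1 b.1 := hab
    have hbC : b.1 ∈ C := by
      obtain ⟨haS, hr⟩ := (hC a.1).mp ha
      exact (hC b.1).mpr ⟨b.2, hr.trans hab.reachable⟩
    have hadj : (G.induce C).Adj ⟨a.1, ha⟩ ⟨b.1, hbC⟩ := hGab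
    obtain ⟨hcC, hr2⟩ := ih hbC
    exact ⟨hcC, hadj.reachable.trans hr2⟩

private lemma add_tube_of_two_uncovered {G : SimpleGraph V} (hG : G.Connected)
    {𝒯 : Finset (Finset V)} (ht : IsTubing G 𝒯) {v w : V} (hvw : v ≠ w)
    (hv : ∀ T ∈ 𝒯, v ∉ T) (hw : ∀ T ∈ 𝒯, w ∉ T) :
    ∃ C : Finset V, C ∉ 𝒯 ∧ IsTubing G (insert C 𝒯) := by
  classical
  set S : Set V := {x | x ≠ w} with hS
  have hvS : v ∈ S := hvw
  set C : Set V := {x | ∃ hx : x ∈ S, (G.induce S).Reachable ⟨v, hvS⟩ ⟨x, hx⟩} with hCdef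
  have hCmem : ∀ x, x ∈ C ↔ ∃ hx : x ∈ S, (G.induce S).Reachable ⟨v, hvS⟩ ⟨x, hx⟩ :=
    fun x => Iff.rfl
  have hvC : v ∈ C := ⟨hvS, SimpleGraph.Reachable.refl _⟩
  have hCS : C ⊆ S := fun x hx => hx.1
  have hwC : w ∉ C := fun hx => hx.1 rfl
  -- C is closed under adjacency within S
  have hclose : ∀ a, a ∈ C → ∀ b, b ∈ S → G.Adj a b → b ∈ C := by
    intro a ha b hbS hab
    obtain ⟨haS, hr⟩ := ha
    refine ⟨hbS, hr.trans (SimpleGraph.Adj.reachable ?_)⟩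
    exact hab
  -- the finset version of C
  set Cf : Finset V := (Set.toFinite C).toFinset with hCf
  have hCfmem : ∀ x, x ∈ Cf ↔ x ∈ C := fun x => Set.Finite.mem_toFinset _
  have hCfcoe : (Cf : Set V) = C := Set.Finite.coe_toFinset _
  have hCfnotin : Cf ∉ 𝒯 := fun hin => hv Cf hin ((hCfmem v).mpr hvC)
  -- Cf is a tube
  have htube : IsTube G Cf := by
    refine ⟨⟨v, (hCfmem v).mpr hvC⟩, ?_, ?_⟩
    · intro hEq
      exact hwC ((hCfmem w).mp (hEq ▸ Finset.mem_univ w))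
    · rw [hCfcoe]
      refine (SimpleGraph.connected_iff _).mpr ⟨fun x y => ?_, ⟨⟨v, hvC⟩⟩⟩
      have key : ∀ z : C, (G.induce C).Reachable ⟨v, hvC⟩ z := by
        intro z
        obtain ⟨hzS, hr⟩ := z.2
        obtain ⟨p⟩ := hr
        obtain ⟨hzC, hr2⟩ := comp_reach hvS C hCmem _ _ p hvC
        exact hr2
      exact (key x).symm.trans (key y)
  -- compatibility of Cf with any tube of 𝒯
  have hcompat : ∀ T ∈ 𝒯, T ⊂ Cf ∨
      ((∀ x ∈ T, x ∉ Cf) ∧ ∀ u ∈ T, ∀ x ∈ Cf, ¬ G.Adj u x) := by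
    intro T hT
    have hTS : (T : Set V) ⊆ S := fun x hx => fun hxw => hw T hT (hxw ▸ hx)
    by_cases hint : ∃ t, t ∈ T ∧ t ∈ C
    · left
      obtain ⟨t, htT, htC⟩ := hint
      have hTsub : ∀ x ∈ T, x ∈ Cf := by
        intro x hxT
        have hconn := (ht.1 T hT).2.2
        have hr : (G.induce (T : Set V)).Reachable ⟨t, htT⟩ ⟨x, hxT⟩ :=
          hconn.preconnected _ _
        have hrS : (G.induce S).Reachable ⟨t, hTS htT⟩ ⟨x, hTS hxT⟩ :=
          reachable_induce_mono hTS htT hxT hr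
        obtain ⟨htS, hrt⟩ := htC
        exact (hCfmem x).mpr ⟨hTS hxT, hrt.trans hrS⟩
      refine Finset.ssubset_iff_of_subset hTsub |>.mpr ⟨v, (hCfmem v).mpr hvC, ?_⟩
      exact hv T hT
    · right
      push_neg at hint
      constructor
      · intro x hxT hxC
        exact hint x hxT ((hCfmem x).mp hxC)
      · intro u huT x hxC hadj
        have huC : u ∈ C := hclose x ((hCfmem x).mp hxC) u (hTS huT) hadj.symm
        exact hint u huT huC
  refine ⟨Cf, hCfnotin, ?_, ?_⟩
  · intro T hT
    rcases Finset.mem_insert.mp hT with rfl | hT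
    · exact htube
    · exact ht.1 T hT
  · intro T hT T' hT' hne
    rcases Finset.mem_insert.mp hT with rfl | hTm
    · rcases Finset.mem_insert.mp hT' with rfl | hTm'
      · exact absurd rfl hne
      · rcases hcompat T' hTm' with hsub | ⟨hdis, hedge⟩
        · exact Or.inr (Or.inl hsub)
        · exact Or.inr (Or.inr ⟨fun x hx hx' => hdis x hx' hx,
            fun u hu x hx hadj => hedge x hx u hu hadj.symm⟩)
    · rcases Finset.mem_insert.mp hT' with rfl | hTm'
      · rcases hcompat T hTm with hsub | ⟨hdis, hedge⟩
        · exact Or.inl hsub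
        · exact Or.inr (Or.inr ⟨hdis, hedge⟩)
      · exact ht.2 T hTm T' hTm' hne

theorem maximal_tubing_unique_untubed_vertex
    (G : SimpleGraph V) (hG : G.Connected) (hV : 2 ≤ Fintype.card V)
    (𝒯 : Finset (Finset V)) (h : IsMaxTubing G 𝒯) :
    ∃! v : V, ∀ T ∈ 𝒯, v ∉ T := by
  classical
  have hne : Nonempty V := Fintype.card_pos_iff.mp (by omega)
  -- Existence
  have hex : ∃ v : V, ∀ T ∈ 𝒯, v ∉ T := by
    by_contra hcon
    push_neg at hcon
    obtain ⟨v0⟩ := hne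
    -- every vertex lies in some tube; pick a maximal tube containing v0
    obtain ⟨T0, hT0m, hT0v⟩ := hcon v0
    obtain ⟨M, hM, hMmax⟩ := (by obtain ⟨m, hm⟩ := (Finset.exists_maximal (s := 𝒯.filter (v0 ∈ ·))
      ⟨T0, Finset.mem_filter.mpr ⟨hT0m, hT0v⟩⟩); exact ⟨m, hm.1, fun X hX hlt => hm.not_gt hX hlt⟩ : ∃ m ∈ 𝒯.filter (v0 ∈ ·), ∀ X ∈ 𝒯.filter (v0 ∈ ·), ¬ m < X)
    rw [Finset.mem_filter] at hM
    obtain ⟨hM𝒯, hMv0⟩ := hM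
    have hMmax' : ∀ X ∈ 𝒯, ¬ M ⊂ X := by
      intro X hX hMX
      exact hMmax X (Finset.mem_filter.mpr ⟨hX, hMX.subset hMv0⟩) hMX
    -- M is closed under adjacency
    have hclosed : ∀ a b, a ∈ (M : Set V) → G.Adj a b → b ∈ (M : Set V) := by
      intro a b ha hab
      obtain ⟨T', hT'm, hT'b⟩ := hcon b
      obtain ⟨M', hM', hM'max⟩ := (by obtain ⟨m, hm⟩ := (Finset.exists_maximal (s := 𝒯.filter (b ∈ ·))
        ⟨T', Finset.mem_filter.mpr ⟨hT'm, hT'b⟩⟩); exact ⟨m, hm.1, fun X hX hlt => hm.not_gt hX hlt⟩ : ∃ m ∈ 𝒯.filter (b ∈ ·), ∀ X ∈ 𝒯.filter (b ∈ ·), ¬ m < X)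
      rw [Finset.mem_filter] at hM'
      obtain ⟨hM'𝒯, hM'b⟩ := hM'
      have hM'max' : ∀ X ∈ 𝒯, ¬ M' ⊂ X := by
        intro X hX hMX
        exact hM'max X (Finset.mem_filter.mpr ⟨hX, hMX.subset hM'b⟩) hMX
      by_cases heq : M = M'
      · exact heq ▸ hM'b
      · rcases h.1.2 M hM𝒯 M' hM'𝒯 heq with hs | hs | ⟨_, hedge⟩
        · exact absurd hs (hMmax' M' hM'𝒯)
        · exact absurd hs (hM'max' M hM𝒯)
        · exact absurd hab (hedge a ha b hM'b)
    have hMuniv : M = Finset.univ := by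
      apply Finset.eq_univ_iff_forall.mpr
      intro x
      obtain ⟨p⟩ := hG.preconnected v0 x
      exact walk_mem_closed hclosed p hMv0
    exact (h.1.1 M hM𝒯).2.1 hMuniv
  obtain ⟨v, hv⟩ := hex
  refine ⟨v, hv, ?_⟩
  intro w hw
  by_contra hne'
  obtain ⟨C, hCnotin, htubing⟩ := add_tube_of_two_uncovered hG h.1 hne' hw hv
  have := h.2 (insert C 𝒯) htubing (Finset.subset_insert _ _)
  exact hCnotin (this ▸ Finset.mem_insert_self C 𝒯)
end

section
/- Let Γ be a finite connected simple graph with vertex set V, let 𝒯 be a maximal tubing of Γ, and let w be its weight vector. Then for every T ∈ 𝒯 ∪ {V} with |T| ≥ 2, the total weight of T satisfies Σ_{v ∈ T} w(v) = 3^{|T|−2}. -/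
variable {V : Type*} [Fintype V] [DecidableEq V]

/-- `w` is the weight vector of the maximal tubing `𝒯`: for each vertex `v`,
if the minimal element `T` of `𝒯 ∪ {univ}` containing `v` is the singleton
`{v}` then `w v = 0`, and otherwise (`|T| ≥ 2`)
`w v = 3^(|T|-2) - ∑_{v' ∈ T, v' ≠ v} w v'`. -/
def IsWeightVector (𝒯 : Finset (Finset V)) (w : V → ℤ) : Prop :=
  ∀ v : V, ∀ T ∈ insert Finset.univ 𝒯, v ∈ T →
    (∀ S ∈ insert Finset.univ 𝒯, v ∈ S → T ⊆ S) →
    (T = {v} → w v = 0) ∧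
    (2 ≤ T.card → w v = 3 ^ (T.card - 2) - ∑ v' ∈ T.erase v, w v')

/-- Crossing lemma: if the induced graph on `T` is connected and `S` meets `T`
but doesn't contain it, there is an edge from `S ∩ T` to `T \ S`. -/
lemma crossing (G : SimpleGraph V) (T S : Finset V)
    (hconn : (G.induce (T : Set V)).Connected)
    (u : V) (huT : u ∈ T) (huS : u ∈ S)
    (x : V) (hxT : x ∈ T) (hxS : x ∉ S) :
    ∃ a ∈ T, ∃ b ∈ T, a ∈ S ∧ b ∉ S ∧ G.Adj a b := by
  obtain ⟨p⟩ := hconn.preconnected ⟨u, huT⟩ ⟨x, hxT⟩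
  obtain ⟨d, _, hd1, hd2⟩ :=
    p.exists_boundary_dart {a : (T : Set V) | (a : V) ∈ S} huS hxS
  exact ⟨d.fst, d.fst.2, d.snd, d.snd.2, hd1, hd2, d.adj⟩

theorem weight_sum_of_tube
    (G : SimpleGraph V) (hG : G.Connected)
    (𝒯 : Finset (Finset V)) (h : IsMaxTubing G 𝒯)
    (w : V → ℤ) (hw : IsWeightVector 𝒯 w) :
    ∀ T ∈ insert Finset.univ 𝒯, 2 ≤ T.card →
      ∑ v ∈ T, w v = 3 ^ (T.card - 2) := by
  obtain ⟨⟨htubes, hpair⟩, _⟩ := h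
  intro T hT hcard
  -- connectivity of the induced graph on T
  have hconn : (G.induce (T : Set V)).Connected := by
    rcases Finset.mem_insert.mp hT with rfl | hT'
    · rw [Finset.coe_univ]
      exact (SimpleGraph.Iso.connected_iff (SimpleGraph.induceUnivIso G)).mpr hG
    · exact (htubes T hT').2.2
  -- T is not covered by its proper sub-tubes
  have hexists : ∃ v ∈ T, ∀ S ∈ 𝒯, S ⊂ T → v ∉ S := by
    by_contra hcov
    push_neg at hcov
    -- pick a proper sub-tube of maximal cardinality
    have hne : (𝒯.filter (· ⊂ T)).Nonempty := by
      obtain ⟨v, hv⟩ := Finset.card_pos.mp (by omega : 0 < T.card)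
      obtain ⟨S, hS, hST, hvS⟩ := hcov v hv
      exact ⟨S, Finset.mem_filter.mpr ⟨hS, hST⟩⟩
    obtain ⟨S, hSmem, hSmax⟩ := (𝒯.filter (· ⊂ T)).exists_max_image Finset.card hne
    rw [Finset.mem_filter] at hSmem
    obtain ⟨hS𝒯, hST⟩ := hSmem
    obtain ⟨u, huS⟩ := (htubes S hS𝒯).1
    obtain ⟨x, hxT, hxS⟩ := Finset.exists_of_ssubset hST
    obtain ⟨a, haT, b, hbT, haS, hbS, hab⟩ :=
      crossing G T S hconn u (hST.subset huS) huS x hxT hxS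
    obtain ⟨S', hS'𝒯, hS'T, hbS'⟩ := hcov b hbT
    have hne' : S ≠ S' := fun e => hbS (e ▸ hbS')
    rcases hpair S hS𝒯 S' hS'𝒯 hne' with hss | hss | ⟨_, hnoedge⟩
    · have := hSmax S' (Finset.mem_filter.mpr ⟨hS'𝒯, hS'T⟩)
      exact absurd (Finset.card_lt_card hss) (by omega)
    · exact hbS (hss.subset hbS')
    · exact hnoedge a haS b hbS' hab
  obtain ⟨v, hvT, hv⟩ := hexists
  -- T is the minimal element of 𝒯 ∪ {univ} containing v
  have hmin : ∀ S ∈ insert Finset.univ 𝒯, v ∈ S → T ⊆ S := by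
    intro S hS hvS
    rcases Finset.mem_insert.mp hS with rfl | hS'
    · exact Finset.subset_univ T
    rcases Finset.mem_insert.mp hT with rfl | hT'
    · -- T = univ, S ∈ 𝒯 so S ⊂ univ, contradicting v ∈ S
      have : S ⊂ Finset.univ :=
        (Finset.subset_univ S).ssubset_of_ne (htubes S hS').2.1
      exact absurd hvS (hv S hS' this)
    by_cases he : S = T
    · exact he ▸ subset_rfl
    rcases hpair T hT' S hS' (fun e => he e.symm) with hss | hss | ⟨hdisj, _⟩
    · exact hss.subset
    · exact absurd hvS (hv S hS' hss)
    · exact absurd hvS (hdisj v hvT)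
  have hwv := (hw v T hT hvT hmin).2 hcard
  rw [← Finset.add_sum_erase T w hvT, hwv]
  ring
end

section
/- Let Γ be a finite connected simple graph with vertex set V, let 𝒯 and 𝒯̃ be maximal tubings of Γ, and let w and w̃ be their weight vectors. If T is a tube belonging to both 𝒯 and 𝒯̃, then Σ_{v ∈ T} w(v) = Σ_{v ∈ T} w̃(v); that is, the total weight of a tube of a maximal tubing is completely determined by the number of vertices in the tube. -/
variable {V : Type*} [Fintype V] [DecidableEq V]

/-- If `A ⊆ T` has no edges to `T \ A`, reachability inside `T` starting in `A`
stays in `A`. -/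
lemma mem_of_reachable_no_edge (G : SimpleGraph V) (T A : Finset V)
    (hedge : ∀ a ∈ A, ∀ b ∈ T, b ∉ A → ¬ G.Adj a b)
    (x y : (T : Set V)) (hr : (G.induce (T : Set V)).Reachable x y)
    (hx : (x : V) ∈ A) : (y : V) ∈ A := by
  obtain ⟨p⟩ := hr
  induction p with
  | nil => exact hx
  | @cons u v z h p ih =>
    by_cases hv : (v : V) ∈ A
    · exact ih hv
    · exact absurd h (hedge u hx v (Finset.mem_coe.mp v.2) hv)

/-- In a tubing, a connected member `T` has a vertex not covered by proper
submembers. -/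
lemma exists_uncovered_vertex (G : SimpleGraph V) (𝒯 : Finset (Finset V))
    (h𝒯 : IsTubing G 𝒯) (T : Finset V) (hne : T.Nonempty)
    (hconn : (G.induce (T : Set V)).Connected) :
    ∃ v ∈ T, ∀ S ∈ 𝒯, S ⊂ T → v ∉ S := by
  by_contra hcon
  push_neg at hcon
  obtain ⟨v0, hv0⟩ := hne
  obtain ⟨S0, hS0, hS0T, hv0S0⟩ := hcon v0 hv0
  -- take a maximal member of 𝒯 properly contained in T and containing v0
  have hFne : (𝒯.filter (fun S => S ⊂ T ∧ v0 ∈ S)).Nonempty :=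
    ⟨S0, Finset.mem_filter.mpr ⟨hS0, hS0T, hv0S0⟩⟩
  obtain ⟨A, hAmem, hAmax'⟩ := Finset.exists_maximal hFne
  have hAmax : ∀ S ∈ 𝒯.filter (fun S => S ⊂ T ∧ v0 ∈ S), ¬ A ⊂ S := fun S hS hlt =>
    (Finset.ssubset_def.mp hlt).2 (hAmax' hS (Finset.ssubset_def.mp hlt).1)
  rw [Finset.mem_filter] at hAmem
  obtain ⟨hA𝒯, hAT, hv0A⟩ := hAmem
  -- every vertex of T outside A has no edge to A
  have hedge : ∀ a ∈ A, ∀ b ∈ T, b ∉ A → ¬ G.Adj a b := by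
    intro a ha b hb hbA
    obtain ⟨S, hS𝒯, hST, hbS⟩ := hcon b hb
    have hne' : A ≠ S := by rintro rfl; exact hbA hbS
    rcases h𝒯.2 A hA𝒯 S hS𝒯 hne' with hlt | hlt | ⟨_, hno⟩
    · exact absurd hlt (hAmax S (Finset.mem_filter.mpr ⟨hS𝒯, hST, hlt.subset hv0A⟩))
    · exact absurd (hlt.subset hbS) hbA
    · exact hno a ha b hbS
  -- A is a proper subset, pick b ∈ T \ A and derive a contradiction
  obtain ⟨b, hbT, hbA⟩ := Finset.exists_of_ssubset hAT
  have hr := hconn.preconnected ⟨v0, by simpa using hv0⟩ ⟨b, by simpa using hbT⟩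
  exact hbA (mem_of_reachable_no_edge G T A hedge _ _ hr hv0A)

/-- The sum of weights over a member of a tubing is determined by its size. -/
lemma sum_weight_eq (G : SimpleGraph V) (𝒯 : Finset (Finset V))
    (h𝒯 : IsTubing G 𝒯) (w : V → ℤ) (hw : IsWeightVector 𝒯 w)
    (T : Finset V) (hT : T ∈ 𝒯) :
    ∑ v ∈ T, w v = if 2 ≤ T.card then 3 ^ (T.card - 2) else 0 := by
  obtain ⟨hne, -, hconn⟩ := h𝒯.1 T hT
  obtain ⟨v, hvT, hvmin⟩ := exists_uncovered_vertex G 𝒯 h𝒯 T hne hconn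
  -- T is the minimal member of 𝒯 ∪ {univ} containing v
  have hmin : ∀ S ∈ insert Finset.univ 𝒯, v ∈ S → T ⊆ S := by
    intro S hS hvS
    rcases Finset.mem_insert.mp hS with rfl | hS𝒯
    · exact Finset.subset_univ T
    by_cases hST : S = T
    · exact hST ▸ le_refl T
    rcases h𝒯.2 T hT S hS𝒯 (fun h => hST h.symm) with hlt | hlt | ⟨hd, -⟩
    · exact hlt.subset
    · exact absurd hvS (hvmin S hS𝒯 hlt)
    · exact absurd (hd v hvT hvS) (fun h => h)
  have hkey := hw v T (Finset.mem_insert_of_mem hT) hvT hmin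
  rcases le_or_gt 2 T.card with hcard | hcard
  · rw [if_pos hcard]
    have hv := hkey.2 hcard
    rw [← Finset.add_sum_erase T w hvT, hv]
    ring
  · rw [if_neg (not_le.mpr hcard)]
    have h1 : T.card = 1 := le_antisymm (by omega) (Finset.card_pos.mpr hne)
    obtain ⟨u, hu⟩ := Finset.card_eq_one.mp h1
    have : u = v := by
      have := hvT; rw [hu, Finset.mem_singleton] at this; exact this.symm
    subst this
    rw [hu, Finset.sum_singleton, hkey.1 hu]

theorem weight_sum_of_common_tube_eq
    (G : SimpleGraph V) (hG : G.Connected)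
    (𝒯 𝒯' : Finset (Finset V)) (h : IsMaxTubing G 𝒯) (h' : IsMaxTubing G 𝒯')
    (w w' : V → ℤ) (hw : IsWeightVector 𝒯 w) (hw' : IsWeightVector 𝒯' w')
    (T : Finset V) (hT : T ∈ 𝒯) (hT' : T ∈ 𝒯') :
    ∑ v ∈ T, w v = ∑ v ∈ T, w' v := by
  rw [sum_weight_eq G 𝒯 h.1 w hw T hT, sum_weight_eq G 𝒯' h'.1 w' hw' T hT']
end

section
/- Let Γ be a finite connected simple graph with vertex set V, let 𝒯 be a maximal tubing of Γ, and let w be its weight vector. Let T ∈ 𝒯 ∪ {V} with |T| ≥ 2 and let v_T be the unique vertex of T not contained in any element of 𝒯 properly contained in T. Then for every tube T' ∈ 𝒯 with T' ⊊ T, one has w(v_T) > Σ_{v ∈ T'} w(v); that is, the maximal vertex of a tube always has weight strictly greater than the total weight of any smaller tube nested inside it. -/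
variable {V : Type*} [Fintype V] [DecidableEq V]

set_option linter.unusedSectionVars false

namespace TubingAux

open Finset

variable {G : SimpleGraph V} {𝒯 : Finset (Finset V)}

/-! ### Reachability within a finite vertex set -/

/-- Reachability within a finset of vertices. -/
def ReachIn (G : SimpleGraph V) (S : Finset V) (x y : V) : Prop :=
  ∃ p : G.Walk x y, ∀ v ∈ p.support, v ∈ S

lemma ReachIn.mem_left {S : Finset V} {x y : V} (h : ReachIn G S x y) : x ∈ S := by
  obtain ⟨p, hp⟩ := h; exact hp _ p.start_mem_support

lemma ReachIn.mem_right {S : Finset V} {x y : V} (h : ReachIn G S x y) : y ∈ S := by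
  obtain ⟨p, hp⟩ := h; exact hp _ p.end_mem_support

lemma ReachIn.refl {S : Finset V} {x : V} (hx : x ∈ S) : ReachIn G S x x :=
  ⟨SimpleGraph.Walk.nil, by simp [hx]⟩

lemma ReachIn.symm {S : Finset V} {x y : V} (h : ReachIn G S x y) : ReachIn G S y x := by
  obtain ⟨p, hp⟩ := h
  exact ⟨p.reverse, by simpa using hp⟩

lemma ReachIn.trans {S : Finset V} {x y z : V} (h : ReachIn G S x y)
    (h' : ReachIn G S y z) : ReachIn G S x z := by
  obtain ⟨p, hp⟩ := h; obtain ⟨q, hq⟩ := h'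
  refine ⟨p.append q, fun v hv => ?_⟩
  rw [SimpleGraph.Walk.mem_support_append_iff] at hv
  exact hv.elim (hp v) (hq v)

lemma ReachIn.adj {S : Finset V} {x y : V} (hx : x ∈ S) (hy : y ∈ S)
    (h : G.Adj x y) : ReachIn G S x y :=
  ⟨h.toWalk, by simp [hx, hy]⟩

lemma ReachIn.mono {S S' : Finset V} (hSS : S ⊆ S') {x y : V}
    (h : ReachIn G S x y) : ReachIn G S' x y := by
  obtain ⟨p, hp⟩ := h; exact ⟨p, fun v hv => hSS (hp v hv)⟩

lemma reachIn_of_induce_connected {S : Finset V}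
    (hc : (G.induce (S : Set V)).Connected) {x y : V} (hx : x ∈ S) (hy : y ∈ S) :
    ReachIn G S x y := by
  obtain ⟨p⟩ := hc.preconnected ⟨x, by simpa using hx⟩ ⟨y, by simpa using hy⟩
  refine ⟨p.map (SimpleGraph.Embedding.induce (S : Set V)).toHom, fun v hv => ?_⟩
  erw [SimpleGraph.Walk.support_map, List.mem_map] at hv
  obtain ⟨⟨u, hu⟩, -, rfl⟩ := hv
  simpa using hu

lemma induce_reachable_of_walk {S : Finset V} {x y : V}
    (p : G.Walk x y) (hp : ∀ v ∈ p.support, v ∈ S) :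
    (G.induce (S : Set V)).Reachable
      ⟨x, by simpa using hp x p.start_mem_support⟩
      ⟨y, by simpa using hp y p.end_mem_support⟩ := by
  induction p with
  | nil => rfl
  | @cons a b c hab q ih =>
    have hb : b ∈ S := hp b (by simp)
    have ha : a ∈ S := hp a (by simp)
    have hrest : ∀ v ∈ q.support, v ∈ S := fun v hv => hp v (by simp [hv])
    have h1 : (G.induce (S : Set V)).Adj ⟨a, by simpa using ha⟩ ⟨b, by simpa using hb⟩ := hab
    exact (h1.reachable).trans (ih hrest)

lemma induce_connected_of_reachIn {S : Finset V} (hS : S.Nonempty)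
    (h : ∀ x ∈ S, ∀ y ∈ S, ReachIn G S x y) :
    (G.induce (S : Set V)).Connected := by
  obtain ⟨x0, hx0⟩ := hS
  have : Nonempty (S : Set V) := ⟨⟨x0, by simpa using hx0⟩⟩
  refine ⟨fun a b => ?_⟩
  obtain ⟨a, ha⟩ := a; obtain ⟨b, hb⟩ := b
  obtain ⟨p, hp⟩ := h a (by simpa using ha) b (by simpa using hb)
  exact induce_reachable_of_walk p hp

/-! ### Basic tubing lemmas -/

lemma nested_of_mem (htub : IsTubing G 𝒯) {S S' : Finset V}
    (hS : S ∈ insert Finset.univ 𝒯) (hS' : S' ∈ insert Finset.univ 𝒯)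
    {v : V} (hv : v ∈ S) (hv' : v ∈ S') : S ⊆ S' ∨ S' ⊆ S := by
  rcases mem_insert.1 hS with rfl | hS
  · exact Or.inr (subset_univ _)
  rcases mem_insert.1 hS' with rfl | hS'
  · exact Or.inl (subset_univ _)
  rcases eq_or_ne S S' with rfl | hne
  · exact Or.inl le_rfl
  rcases htub.2 S hS S' hS' hne with h | h | h
  · exact Or.inl h.subset
  · exact Or.inr h.subset
  · exact absurd hv' (h.1 v hv)

lemma exists_min_tube (htub : IsTubing G 𝒯) (v : V) :
    ∃ M ∈ insert Finset.univ 𝒯, v ∈ M ∧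
      ∀ S ∈ insert Finset.univ 𝒯, v ∈ S → M ⊆ S := by
  classical
  obtain ⟨M, hM, hMmin⟩ := Finset.exists_min_image
    ((insert Finset.univ 𝒯).filter (fun S => v ∈ S)) Finset.card
    ⟨Finset.univ, by simp⟩
  rw [mem_filter] at hM
  refine ⟨M, hM.1, hM.2, fun S hS hvS => ?_⟩
  have hcard := hMmin S (mem_filter.2 ⟨hS, hvS⟩)
  rcases nested_of_mem htub hM.1 hS hM.2 hvS with h | h
  · exact h
  · exact (Finset.eq_of_subset_of_card_le h hcard).ge

lemma tube_reachIn (hG : G.Connected) (htub : IsTubing G 𝒯) {T : Finset V}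
    (hT : T ∈ insert Finset.univ 𝒯) {x y : V} (hx : x ∈ T) (hy : y ∈ T) :
    ReachIn G T x y := by
  rcases mem_insert.1 hT with rfl | hT
  · obtain ⟨p⟩ := hG.preconnected x y
    exact ⟨p, fun v _ => mem_univ v⟩
  · exact reachIn_of_induce_connected (htub.1 T hT).2.2 hx hy

lemma crossing_of_walk {S T : Finset V} {a b : V} (p : G.Walk a b)
    (hp : ∀ v ∈ p.support, v ∈ T) (ha : a ∈ S) (hb : b ∉ S) :
    ∃ x ∈ S, ∃ y ∈ T, y ∉ S ∧ G.Adj x y := by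
  induction p with
  | nil => exact absurd ha hb
  | @cons u c d hadj q ih =>
    by_cases hc : c ∈ S
    · exact ih (fun v hv => hp v (by simp [hv])) hc hb
    · exact ⟨u, ha, c, hp c (by simp), hc, hadj⟩

lemma exists_uncovered (hG : G.Connected) (htub : IsTubing G 𝒯) {T : Finset V}
    (hT : T ∈ insert Finset.univ 𝒯) (hTne : T.Nonempty) :
    ∃ v ∈ T, ∀ S ∈ 𝒯, S ⊂ T → v ∉ S := by
  classical
  by_cases hP : (𝒯.filter (· ⊂ T)).Nonempty
  · obtain ⟨C, hC, hCmax⟩ := Finset.exists_max_image _ Finset.card hP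
    rw [mem_filter] at hC
    have hC𝒯 : C ∈ 𝒯 := hC.1
    have hCT : C ⊂ T := hC.2
    obtain ⟨a, haC⟩ := (htub.1 C hC𝒯).1
    obtain ⟨b, hbT, hbC⟩ := Finset.exists_of_ssubset hCT
    obtain ⟨p, hp⟩ := tube_reachIn hG htub hT (hCT.subset haC) hbT
    obtain ⟨x, hxC, y, hyT, hyC, hadj⟩ := crossing_of_walk p hp haC hbC
    refine ⟨y, hyT, fun S hS hST hyS => ?_⟩
    have hSC : S ≠ C := fun h => hyC (h ▸ hyS)
    rcases htub.2 S hS C hC𝒯 hSC with h | h | h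
    · exact hyC (h.subset hyS)
    · have := hCmax S (mem_filter.2 ⟨hS, hST⟩)
      exact absurd (Finset.card_lt_card h) (by omega)
    · exact h.2 y hyS x hxC hadj.symm
  · obtain ⟨v, hv⟩ := hTne
    refine ⟨v, hv, fun S hS hST _ => ?_⟩
    exact hP ⟨S, mem_filter.2 ⟨hS, hST⟩⟩

/-! ### Uniqueness of the uncovered vertex, via maximality -/

lemma uncovered_unique (hG : G.Connected) (hmax : IsMaxTubing G 𝒯) {T : Finset V}
    (hT : T ∈ insert Finset.univ 𝒯) {u u' : V} (hu : u ∈ T) (hu' : u' ∈ T)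
    (hcov : ∀ S ∈ 𝒯, S ⊂ T → u ∉ S) (hcov' : ∀ S ∈ 𝒯, S ⊂ T → u' ∉ S) :
    u = u' := by
  classical
  by_contra hne
  have htub := hmax.1
  set E : Finset V := T.erase u' with hE
  have hEsub : E ⊆ T := erase_subset _ _
  have huE : u ∈ E := mem_erase.2 ⟨hne, hu⟩
  set Y : Finset V := E.filter (fun x => ReachIn G E u x) with hY
  have hYsubE : Y ⊆ E := filter_subset _ _
  have hYsubT : Y ⊆ T := hYsubE.trans hEsub
  have hmemY : ∀ {x : V}, x ∈ Y ↔ x ∈ E ∧ ReachIn G E u x := by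
    intro x; simp [hY, mem_filter]
  have huY : u ∈ Y := hmemY.2 ⟨huE, ReachIn.refl huE⟩
  have hclos : ∀ {x z : V}, x ∈ Y → ReachIn G E x z → z ∈ Y := by
    intro x z hx hxz
    exact hmemY.2 ⟨hxz.mem_right, ((hmemY.1 hx).2).trans hxz⟩
  have hu'Y : u' ∉ Y := fun hmem => (mem_erase.1 (hYsubE hmem)).1 rfl
  have hYssT : Y ⊂ T := ⟨hYsubT, fun hsub => hu'Y (hsub hu')⟩
  have hYnotmem : Y ∉ 𝒯 := fun hmem => hcov Y hmem hYssT huY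
  -- connectivity of Y
  have hYreach : ∀ x ∈ Y, ∀ y ∈ Y, ReachIn G Y x y := by
    have key : ∀ x ∈ Y, ReachIn G Y u x := by
      intro x hx
      obtain ⟨p, hp⟩ := (hmemY.1 hx).2
      refine ⟨p, fun z hz => ?_⟩
      refine hmemY.2 ⟨hp z hz, ⟨p.takeUntil z hz, fun a ha => hp a
        (p.support_takeUntil_subset hz ha)⟩⟩
    intro x hx y hy
    exact (key x hx).symm.trans (key y hy)
  have hYtube : IsTube G Y := by
    refine ⟨⟨u, huY⟩, fun hY2 => ?_, induce_connected_of_reachIn ⟨u, huY⟩ hYreach⟩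
    · exact hu'Y (hY2 ▸ mem_univ u')
  -- compatibility of Y with every member of 𝒯
  have compat : ∀ S ∈ 𝒯, S ≠ Y →
      Y ⊂ S ∨ S ⊂ Y ∨ ((∀ v ∈ Y, v ∉ S) ∧ ∀ a ∈ Y, ∀ b ∈ S, ¬ G.Adj a b) := by
    intro S hS hSne
    by_cases hST : S ⊂ T
    · -- S lies inside T and avoids u'
      have hSE : S ⊆ E := fun v hv =>
        mem_erase.2 ⟨fun hveq => hcov' S hS hST (hveq ▸ hv), hST.subset hv⟩
      by_cases hint : ∃ x, x ∈ S ∧ x ∈ Y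
      · obtain ⟨x, hxS, hxY⟩ := hint
        have hSY : S ⊆ Y := by
          intro y hyS
          have : ReachIn G S x y :=
            tube_reachIn hG htub (mem_insert_of_mem hS) hxS hyS
          exact hclos hxY (this.mono hSE)
        exact Or.inr (Or.inl ⟨hSY, fun hYS => hSne (Finset.Subset.antisymm hSY hYS)⟩)
      · refine Or.inr (Or.inr ⟨fun v hv hvS => hint ⟨v, hvS, hv⟩, ?_⟩)
        intro a ha b hb hadj
        have hbY : b ∈ Y := hclos ha (ReachIn.adj (hYsubE ha) (hSE hb) hadj)
        exact hint ⟨b, hb, hbY⟩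
    · -- S is not strictly inside T
      have hTmem : T ∈ 𝒯 := by
        rcases mem_insert.1 hT with rfl | h
        · exact absurd ⟨subset_univ S, fun hsub =>
            (htub.1 S hS).2.1 (Finset.univ_subset_iff.1 hsub)⟩ hST
        · exact h
      rcases eq_or_ne S T with rfl | hSneT
      · exact Or.inl hYssT
      rcases htub.2 S hS T hTmem hSneT with h | h | h
      · exact absurd h hST
      · exact Or.inl (hYssT.trans_subset h.subset)
      · refine Or.inr (Or.inr ⟨fun v hv hvS => h.1 v hvS (hYsubT hv), ?_⟩)
        intro a ha b hb hadj
        exact h.2 b hb a (hYsubT ha) hadj.symm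
  -- insert Y 𝒯 is a tubing
  have htub' : IsTubing G (insert Y 𝒯) := by
    constructor
    · intro S hS
      rcases mem_insert.1 hS with rfl | hS
      · exact hYtube
      · exact htub.1 S hS
    · intro T₁ hT₁ T₂ hT₂ hne12
      rcases mem_insert.1 hT₁ with rfl | h1
      · rcases mem_insert.1 hT₂ with rfl | h2
        · exact absurd rfl hne12
        · exact compat T₂ h2 (Ne.symm hne12)
      · rcases mem_insert.1 hT₂ with rfl | h2
        · rcases compat T₁ h1 hne12 with h | h | h
          · exact Or.inr (Or.inl h)
          · exact Or.inl h
          · exact Or.inr (Or.inr ⟨fun v hv hvY => h.1 v hvY hv,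
              fun a ha b hb hadj => h.2 b hb a ha hadj.symm⟩)
        · exact htub.2 T₁ h1 T₂ h2 hne12
  have := hmax.2 (insert Y 𝒯) htub' (subset_insert _ _)
  exact hYnotmem (this ▸ mem_insert_self Y 𝒯)

/-! ### The numeric bound function -/

/-- Total weight of a tube of a given size. -/
def fbd : ℕ → ℤ := fun n => if n ≤ 1 then 0 else 3 ^ (n - 2)

lemma fbd_nonneg (n : ℕ) : 0 ≤ fbd n := by
  unfold fbd; split <;> positivity

lemma fbd_mono {m n : ℕ} (h : m ≤ n) : fbd m ≤ fbd n := by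
  unfold fbd
  split
  · split
    · exact le_rfl
    · positivity
  · rw [if_neg (by omega)]
    exact pow_le_pow_right₀ (by norm_num) (by omega)

lemma fbd_superadd {a b : ℕ} : fbd a + fbd b ≤ fbd (a + b) := by
  rcases le_or_gt a 1 with ha | ha
  · rw [show fbd a = 0 by unfold fbd; rw [if_pos ha]]
    simpa using fbd_mono (by omega : b ≤ a + b)
  rcases le_or_gt b 1 with hb | hb
  · rw [show fbd b = 0 by unfold fbd; rw [if_pos hb]]
    simpa using fbd_mono (by omega : a ≤ a + b)
  have h1 : fbd a = 3 ^ (a - 2) := by unfold fbd; rw [if_neg (by omega)]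
  have h2 : fbd b = 3 ^ (b - 2) := by unfold fbd; rw [if_neg (by omega)]
  have h3 : fbd (a + b) = 3 ^ (a + b - 2) := by unfold fbd; rw [if_neg (by omega)]
  rw [h1, h2, h3]
  have e1 : (3:ℤ) ^ (a - 2) ≤ 3 ^ (a + b - 3) :=
    pow_le_pow_right₀ (by norm_num) (by omega)
  have e2 : (3:ℤ) ^ (b - 2) ≤ 3 ^ (a + b - 3) :=
    pow_le_pow_right₀ (by norm_num) (by omega)
  have e3 : a + b - 2 = (a + b - 3) + 1 := by omega
  rw [e3, pow_succ]
  have : (0:ℤ) ≤ 3 ^ (a + b - 3) := by positivity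
  linarith

lemma fbd_sum {α : Type*} [DecidableEq α] (s : Finset α) (g : α → ℕ) :
    ∑ x ∈ s, fbd (g x) ≤ fbd (∑ x ∈ s, g x) := by
  classical
  induction s using Finset.induction_on with
  | empty => simp [fbd]
  | insert _ _ hx ih =>
    rw [Finset.sum_insert hx, Finset.sum_insert hx]
    calc _ ≤ fbd (g _) + fbd (∑ x ∈ _, g x) := by linarith
    _ ≤ _ := fbd_superadd

lemma fbd_lt {n : ℕ} (hn : 2 ≤ n) : 2 * fbd (n - 1) < 3 ^ (n - 2) := by
  rcases eq_or_lt_of_le hn with rfl | hn3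
  · simp [fbd]
  have : fbd (n - 1) = 3 ^ (n - 3) := by
    unfold fbd; rw [if_neg (by omega), show n - 1 - 2 = n - 3 by omega]
  rw [this, show n - 2 = (n-3)+1 by omega, pow_succ]
  have : (0:ℤ) < 3 ^ (n - 3) := by positivity
  linarith

/-! ### Weight computations -/

/-- The total weight of any tube of a maximal tubing is `fbd` of its size. -/
lemma tube_sum_weights (hG : G.Connected) (hmax : IsMaxTubing G 𝒯)
    {w : V → ℤ} (hw : IsWeightVector 𝒯 w) {S : Finset V} (hS : S ∈ 𝒯) :
    ∑ v ∈ S, w v = fbd S.card := by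
  classical
  have htub := hmax.1
  have hSne : S.Nonempty := (htub.1 S hS).1
  obtain ⟨v, hvS, hvuncov⟩ :=
    exists_uncovered hG htub (mem_insert_of_mem hS) hSne
  obtain ⟨M, hM, hvM, hMmin⟩ := exists_min_tube htub v
  have hMS : M ⊆ S := hMmin S (mem_insert_of_mem hS) hvS
  have hMeq : M = S := by
    by_contra hne
    have hMss : M ⊂ S := ⟨hMS, fun hsub => hne (Finset.Subset.antisymm hMS hsub)⟩
    have hM𝒯 : M ∈ 𝒯 := by
      rcases mem_insert.1 hM with rfl | h
      · exact absurd (subset_univ S) hMss.2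
      · exact h
    exact hvuncov M hM𝒯 hMss hvM
  subst hMeq
  have hwv := hw v M hM hvM hMmin
  rcases Nat.lt_or_ge M.card 2 with hcard | hcard
  · have hcard1 : M.card = 1 := by
      have := Finset.card_pos.2 hSne; omega
    obtain ⟨a, ha⟩ := Finset.card_eq_one.1 hcard1
    subst ha
    have hva : v = a := by simpa using hvS
    subst hva
    rw [Finset.sum_singleton, hwv.1 rfl, hcard1]
    simp [fbd]
  · have hrec := hwv.2 hcard
    have hsum : w v + ∑ v' ∈ M.erase v, w v' = ∑ v' ∈ M, w v' :=
      Finset.add_sum_erase M w hvM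
    have : ∑ v' ∈ M, w v' = 3 ^ (M.card - 2) := by
      rw [← hsum, hrec]; ring
    rw [this]
    unfold fbd
    rw [if_neg (by omega)]

end TubingAux

open Finset TubingAux in
theorem maximal_vertex_weight_gt_subtube_weight
    (G : SimpleGraph V) (hG : G.Connected)
    (𝒯 : Finset (Finset V)) (h : IsMaxTubing G 𝒯)
    (w : V → ℤ) (hw : IsWeightVector 𝒯 w)
    (T : Finset V) (hT : T ∈ insert Finset.univ 𝒯) (hTcard : 2 ≤ T.card)
    (vT : V) (hvT : vT ∈ T ∧ ∀ S ∈ 𝒯, S ⊂ T → vT ∉ S) :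
    ∀ T' ∈ 𝒯, T' ⊂ T → (∑ v ∈ T', w v) < w vT := by
  classical
  intro T' hT' hT'T
  have htub := h.1
  -- the minimal tube containing vT is T itself
  obtain ⟨M, hM, hvM, hMmin⟩ := exists_min_tube htub vT
  have hMT : M ⊆ T := hMmin T hT hvT.1
  have hMeq : M = T := by
    by_contra hne
    have hMss : M ⊂ T := ⟨hMT, fun hsub => hne (Finset.Subset.antisymm hMT hsub)⟩
    have hM𝒯 : M ∈ 𝒯 := by
      rcases Finset.mem_insert.1 hM with rfl | hh
      · exact absurd (subset_univ T) hMss.2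
      · exact hh
    exact hvT.2 M hM𝒯 hMss hvM
  subst hMeq
  -- the recursive formula for w vT
  have hrec := (hw vT M hM hvM hMmin).2 hTcard
  -- children of T (i.e. of M)
  set children : Finset (Finset V) :=
    𝒯.filter (fun C => C ⊂ M ∧ ∀ S ∈ 𝒯, S ⊂ M → ¬ (C ⊂ S)) with hchildren
  have hchild_mem : ∀ {C : Finset V}, C ∈ children ↔
      C ∈ 𝒯 ∧ C ⊂ M ∧ ∀ S ∈ 𝒯, S ⊂ M → ¬ (C ⊂ S) := by
    intro C; simp [hchildren, Finset.mem_filter]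
  -- every vertex of M other than vT lies in a (unique) child
  have hcover : ∀ v ∈ M.erase vT, ∃ C ∈ children, v ∈ C := by
    intro v hv
    obtain ⟨hvne, hvM'⟩ := Finset.mem_erase.1 hv
    have hcovered : ∃ S ∈ 𝒯, S ⊂ M ∧ v ∈ S := by
      by_contra hun
      push_neg at hun
      exact hvne (uncovered_unique hG h hM hvM' hvT.1
        (fun S hS hSM hvS => hun S hS hSM hvS) hvT.2)
    obtain ⟨S0, hS0, hS0M, hvS0⟩ := hcovered
    obtain ⟨C, hC, hCmax⟩ := Finset.exists_max_image
      (𝒯.filter (fun S => S ⊂ M ∧ v ∈ S)) Finset.card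
      ⟨S0, Finset.mem_filter.2 ⟨hS0, hS0M, hvS0⟩⟩
    rw [Finset.mem_filter] at hC
    refine ⟨C, hchild_mem.2 ⟨hC.1, hC.2.1, fun S hS hSM hCS => ?_⟩, hC.2.2⟩
    have := hCmax S (Finset.mem_filter.2 ⟨hS, hSM, hCS.subset hC.2.2⟩)
    exact absurd (Finset.card_lt_card hCS) (by omega)
  have hchild_unique : ∀ {C C' : Finset V}, C ∈ children → C' ∈ children →
      ∀ {v : V}, v ∈ C → v ∈ C' → C = C' := by
    intro C C' hC hC' v hvC hvC'
    obtain ⟨hC𝒯, hCM, hCmax⟩ := hchild_mem.1 hC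
    obtain ⟨hC'𝒯, hC'M, hC'max⟩ := hchild_mem.1 hC'
    rcases nested_of_mem htub (mem_insert_of_mem hC𝒯) (mem_insert_of_mem hC'𝒯)
      hvC hvC' with hsub | hsub
    · rcases eq_or_ne C C' with rfl | hne
      · rfl
      · exact absurd ⟨hsub, fun hs => hne (Finset.Subset.antisymm hsub hs)⟩
          (hCmax C' hC'𝒯 hC'M)
    · rcases eq_or_ne C' C with rfl | hne
      · rfl
      · exact absurd (⟨hsub, fun hs => hne (Finset.Subset.antisymm hsub hs)⟩ :
          C' ⊂ C) (hC'max C hC𝒯 hCM)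
  have hchild_sub : ∀ {C : Finset V}, C ∈ children → C ⊆ M.erase vT := by
    intro C hC x hx
    obtain ⟨hC𝒯, hCM, -⟩ := hchild_mem.1 hC
    exact Finset.mem_erase.2 ⟨fun hxv => hvT.2 C hC𝒯 hCM (hxv ▸ hx), hCM.subset hx⟩
  have hbiUnion : M.erase vT = children.biUnion id := by
    apply Finset.Subset.antisymm
    · intro v hv
      obtain ⟨C, hC, hvC⟩ := hcover v hv
      exact Finset.mem_biUnion.2 ⟨C, hC, hvC⟩
    · intro v hv
      obtain ⟨C, hC, hvC⟩ := Finset.mem_biUnion.1 hv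
      exact hchild_sub hC hvC
  have hdisj : ∀ x ∈ children, ∀ y ∈ children, x ≠ y → Disjoint (id x) (id y) := by
    intro x hx y hy hne
    rw [Finset.disjoint_left]
    intro a hax hay
    exact hne (hchild_unique hx hy hax hay)
  -- sum of weights over the children
  have hpwd : Set.PairwiseDisjoint (↑children) (id : Finset V → Finset V) :=
    fun x hx y hy hne => hdisj x hx y hy hne
  have hsum_erase : ∑ v ∈ M.erase vT, w v = ∑ C ∈ children, ∑ v ∈ C, w v := by
    rw [hbiUnion, Finset.sum_biUnion hpwd]
    rfl
  have hcard_erase : ∑ C ∈ children, C.card = M.card - 1 := by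
    have h1 : (children.biUnion id).card = ∑ C ∈ children, C.card :=
      Finset.card_biUnion hdisj
    rw [← hbiUnion] at h1
    rw [← h1, Finset.card_erase_of_mem hvM]
  have hbound : ∑ v ∈ M.erase vT, w v ≤ fbd (M.card - 1) := by
    rw [hsum_erase]
    have h1 : ∀ C ∈ children, ∑ v ∈ C, w v = fbd C.card := fun C hC =>
      tube_sum_weights hG h hw (hchild_mem.1 hC).1
    rw [Finset.sum_congr rfl h1]
    calc ∑ C ∈ children, fbd C.card ≤ fbd (∑ C ∈ children, C.card) :=
          fbd_sum children Finset.card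
      _ = fbd (M.card - 1) := by rw [hcard_erase]
  -- total weight of T'
  have hT'sum : ∑ v ∈ T', w v = fbd T'.card := tube_sum_weights hG h hw hT'
  have hT'card : T'.card ≤ M.card - 1 := by
    have := Finset.card_lt_card hT'T; omega
  have hT'le : ∑ v ∈ T', w v ≤ fbd (M.card - 1) := by
    rw [hT'sum]; exact fbd_mono hT'card
  have hnum : 2 * fbd (M.card - 1) < 3 ^ (M.card - 2) := fbd_lt hTcard
  have hwvT : w vT = 3 ^ (M.card - 2) - ∑ v' ∈ M.erase vT, w v' := hrec
  linarith
end

section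
/- Let Γ be a finite connected simple graph with vertex set V and let 𝒯 be a maximal tubing of Γ. For each T ∈ 𝒯 ∪ {V} with |T| ≥ 2, let v_T be the unique vertex of T not contained in any element of 𝒯 properly contained in T, and consider the maximal elements of the set {S ∈ 𝒯 : S ⊊ T} under inclusion. These maximal proper subtubes of T are pairwise disjoint and their union equals T \ {v_T}. -/
variable {V : Type*} [Fintype V] [DecidableEq V]

private lemma reach_induce_mono {G : SimpleGraph V} {s t : Set V} (hst : s ⊆ t) {u v : V}
    (hu : u ∈ s) (hv : v ∈ s)
    (h : (G.induce s).Reachable ⟨u, hu⟩ ⟨v, hv⟩) :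
    (G.induce t).Reachable ⟨u, hst hu⟩ ⟨v, hst hv⟩ :=
  h.map (SimpleGraph.induceHom SimpleGraph.Hom.id (fun a ha => hst ha))

private lemma exists_max {𝒯 : Finset (Finset V)} {T S : Finset V} (hS : S ∈ 𝒯) (hST : S ⊂ T) :
    ∃ S', (S' ∈ 𝒯 ∧ S' ⊂ T ∧ ∀ S'' ∈ 𝒯, S'' ⊂ T → S' ⊆ S'' → S' = S'') ∧ S ⊆ S' := by
  classical
  have hne : (𝒯.filter (fun S'' => S ⊆ S'' ∧ S'' ⊂ T)).Nonempty := ⟨S, by simp [hS, hST]⟩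
  obtain ⟨m, hm, hmax⟩ := Finset.exists_maximal hne
  simp only [Finset.mem_filter] at hm
  refine ⟨m, ⟨hm.1, hm.2.2, ?_⟩, hm.2.1⟩
  intro S'' hS'' hS''T hmS''
  by_contra hne'
  exact hne' (le_antisymm hmS''
    (hmax (Finset.mem_filter.2 ⟨hS'', hm.2.1.trans hmS'', hS''T⟩) hmS''))

private lemma key {G : SimpleGraph V} {𝒯 : Finset (Finset V)} (h : IsMaxTubing G 𝒯)
    {T : Finset V} (hT : T ∈ insert Finset.univ 𝒯)
    {x y : V} (hx : x ∈ T) (hy : y ∈ T) (hxy : x ≠ y)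
    (hyS : ∀ S ∈ 𝒯, S ⊂ T → y ∉ S) :
    ∃ S ∈ 𝒯, S ⊂ T ∧ x ∈ S := by
  classical
  set A : Finset V := T.erase y with hA
  have hxA : x ∈ A := Finset.mem_erase.2 ⟨hxy, hx⟩
  set C : Finset V := A.filter (fun v => ∃ p : G.Walk x v, ∀ u ∈ p.support, u ∈ A) with hCdef
  have hCA : C ⊆ A := Finset.filter_subset _ _
  have hxC : x ∈ C := by
    refine Finset.mem_filter.2 ⟨hxA, ⟨SimpleGraph.Walk.nil, ?_⟩⟩
    intro u hu
    simp only [SimpleGraph.Walk.support_nil, List.mem_singleton] at hu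
    subst hu; exact hxA
  have hyC : y ∉ C := fun hyc => (Finset.mem_erase.1 (hCA hyc)).1 rfl
  have hCT : C ⊆ T := fun v hv => Finset.mem_of_mem_erase (hCA hv)
  have cl : ∀ u ∈ C, ∀ v ∈ A, G.Adj u v → v ∈ C := by
    intro u hu v hv hadj
    obtain ⟨huA, p, hp⟩ := Finset.mem_filter.1 hu
    refine Finset.mem_filter.2 ⟨hv, p.concat hadj, ?_⟩
    intro w hw
    rw [SimpleGraph.Walk.support_concat, List.mem_append] at hw
    rcases hw with hw | hw
    · exact hp _ hw
    · simp only [List.mem_singleton] at hw; subst hw; exact hv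
  have wc : ∀ (D : Finset V), D ⊆ A → ∀ {a b : (↑D : Set V)},
      (G.induce (↑D : Set V)).Walk a b → (a : V) ∈ C → (b : V) ∈ C := by
    intro D hDA a b p
    induction p with
    | nil => exact id
    | @cons u v w hadj p ih =>
        intro ha
        have hvA : (v : V) ∈ A := hDA (Finset.mem_coe.1 v.2)
        have hadj' : G.Adj (u : V) (v : V) := hadj
        exact ih (cl _ ha _ hvA hadj')
  have walkC : ∀ v ∈ C, ∃ p : G.Walk x v, ∀ u ∈ p.support, u ∈ C := by
    intro v hv
    obtain ⟨hvA, p, hp⟩ := Finset.mem_filter.1 hv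
    refine ⟨p, fun u hu => ?_⟩
    exact Finset.mem_filter.2 ⟨hp u hu, p.takeUntil u hu,
      fun w hw => hp w (SimpleGraph.Walk.support_takeUntil_subset _ hu hw)⟩
  have connC : (G.induce (↑C : Set V)).Connected := by
    have hreach : ∀ (v : V) (hv : v ∈ C),
        (G.induce (↑C : Set V)).Reachable ⟨x, hxC⟩ ⟨v, hv⟩ := by
      intro v hv
      obtain ⟨p, hp⟩ := walkC v hv
      have hconn := p.connected_induce_support
      have hr := hconn.preconnected ⟨x, p.start_mem_support⟩ ⟨v, p.end_mem_support⟩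
      exact reach_induce_mono (fun w hw => Finset.mem_coe.2 (hp w hw))
        p.start_mem_support p.end_mem_support hr
    have : Nonempty (↑C : Set V) := ⟨⟨x, hxC⟩⟩
    refine SimpleGraph.Connected.mk ?_
    rintro ⟨a, ha⟩ ⟨b, hb⟩
    exact (hreach a ha).symm.trans (hreach b hb)
  have tubeC : IsTube G C := by
    refine ⟨⟨x, hxC⟩, ?_, connC⟩
    intro hCu
    exact hyC (hCu ▸ Finset.mem_univ y)
  have hSA : ∀ S ∈ 𝒯, S ⊂ T → S ⊆ A := by
    intro S hS hST u hu
    exact Finset.mem_erase.2 ⟨fun h' => hyS S hS hST (h' ▸ hu), hST.1 hu⟩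
  have hsub : ∀ S ∈ 𝒯, S ⊂ T → ∀ v ∈ S, v ∈ C → S ⊆ C := by
    intro S hS hST v hvS hvC w hwS
    have hconnS : (G.induce (↑S : Set V)).Connected := (h.1.1 S hS).2.2
    have hr := hconnS.preconnected ⟨v, hvS⟩ ⟨w, hwS⟩
    exact hr.elim fun p => wc S (hSA S hS hST) p hvC
  have hnoedge : ∀ S ∈ 𝒯, S ⊂ T → (∀ v ∈ C, v ∉ S) → ∀ u ∈ C, ∀ v ∈ S, ¬ G.Adj u v := by
    intro S hS hST hdisj u hu v hv hadj
    exact hdisj v (cl u hu v (hSA S hS hST hv) hadj) hv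
  have compat : ∀ S ∈ 𝒯, S ≠ C →
      (C ⊂ S ∨ S ⊂ C ∨ ((∀ v ∈ C, v ∉ S) ∧ ∀ u ∈ C, ∀ v ∈ S, ¬ G.Adj u v)) := by
    intro S hS hSC
    have hSsubT : S ⊂ T ∨ T ⊆ S ∨ ((∀ v ∈ S, v ∉ T) ∧ ∀ u ∈ S, ∀ v ∈ T, ¬ G.Adj u v) := by
      rcases Finset.mem_insert.1 hT with rfl | hTmem
      · left; exact Finset.ssubset_univ_iff.2 (h.1.1 S hS).2.1
      · by_cases hST : S = T
        · right; left; exact hST.ge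
        · rcases h.1.2 S hS T hTmem hST with h1 | h1 | h1
          · left; exact h1
          · right; left; exact h1.1
          · right; right; exact h1
    rcases hSsubT with hST | hTS | hdisjT
    · by_cases hints : ∃ v ∈ S, v ∈ C
      · obtain ⟨v, hvS, hvC⟩ := hints
        right; left
        exact Finset.ssubset_iff_subset_ne.2 ⟨hsub S hS hST v hvS hvC, hSC⟩
      · push_neg at hints
        right; right
        refine ⟨fun v hv hvS => hints v hvS hv, ?_⟩
        exact hnoedge S hS hST (fun w hw hwS => hints w hwS hw)
    · left
      exact Finset.ssubset_iff_subset_ne.2 ⟨fun v hv => hTS (hCT hv), fun e => hSC e.symm⟩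
    · right; right
      refine ⟨fun v hv hvS => hdisjT.1 v hvS (hCT hv),
        fun u hu v hv hadj => hdisjT.2 v hv u (hCT hu) hadj.symm⟩
  have htub : IsTubing G (insert C 𝒯) := by
    constructor
    · intro S hS
      rcases Finset.mem_insert.1 hS with rfl | hS
      · exact tubeC
      · exact h.1.1 S hS
    · intro T1 h1 T2 h2 hne
      rcases Finset.mem_insert.1 h1 with rfl | h1 <;> rcases Finset.mem_insert.1 h2 with rfl | h2
      · exact absurd rfl hne
      · exact compat T2 h2 (Ne.symm hne)
      · rcases compat T1 h1 hne with hcc | hcc | hcc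
        · exact Or.inr (Or.inl hcc)
        · exact Or.inl hcc
        · exact Or.inr (Or.inr ⟨fun v hv hvC => hcc.1 v hvC hv,
            fun u hu v hv hadj => hcc.2 v hv u hu hadj.symm⟩)
      · exact h.1.2 T1 h1 T2 h2 hne
  have hCmem : C ∈ 𝒯 := by
    have heq := h.2 (insert C 𝒯) htub (Finset.subset_insert _ _)
    exact heq ▸ Finset.mem_insert_self C 𝒯
  refine ⟨C, hCmem, Finset.ssubset_iff_subset_ne.2 ⟨hCT, ?_⟩, hxC⟩
  intro e
  exact hyC (by rw [e]; exact hy)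

theorem maximal_proper_subtubes_partition
    (G : SimpleGraph V) (hG : G.Connected)
    (𝒯 : Finset (Finset V)) (h : IsMaxTubing G 𝒯)
    (T : Finset V) (hT : T ∈ insert Finset.univ 𝒯) (hTcard : 2 ≤ T.card)
    (vT : V) (hvT : vT ∈ T ∧ ∀ S ∈ 𝒯, S ⊂ T → vT ∉ S) :
    (∀ S S' : Finset V,
        (S ∈ 𝒯 ∧ S ⊂ T ∧ ∀ S'' ∈ 𝒯, S'' ⊂ T → S ⊆ S'' → S = S'') →
        (S' ∈ 𝒯 ∧ S' ⊂ T ∧ ∀ S'' ∈ 𝒯, S'' ⊂ T → S' ⊆ S'' → S' = S'') →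
        S ≠ S' → Disjoint S S') ∧
    ∀ x : V, (x ∈ T ∧ x ≠ vT) ↔
      ∃ S : Finset V,
        (S ∈ 𝒯 ∧ S ⊂ T ∧ ∀ S'' ∈ 𝒯, S'' ⊂ T → S ⊆ S'' → S = S'') ∧ x ∈ S := by
  constructor
  · rintro S S' ⟨hS, hST, hSmax⟩ ⟨hS', hS'T, hS'max⟩ hne
    rcases h.1.2 S hS S' hS' hne with h1 | h1 | h1
    · exact absurd (hSmax S' hS' hS'T h1.1) hne
    · exact absurd (hS'max S hS hST h1.1).symm hne
    · exact Finset.disjoint_left.2 h1.1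
  · intro x
    constructor
    · rintro ⟨hxT, hxv⟩
      obtain ⟨S0, hS0, hS0T, hxS0⟩ := key h hT hxT hvT.1 hxv hvT.2
      obtain ⟨S, hS, hS0S⟩ := exists_max hS0 hS0T
      exact ⟨S, hS, hS0S hxS0⟩
    · rintro ⟨S, ⟨hS, hST, _⟩, hxS⟩
      exact ⟨hST.1 hxS, fun e => hvT.2 S hS hST (e ▸ hxS)⟩
end

section
/- Let Γ be a finite connected simple graph with vertex set V, let 𝒯 be a maximal tubing of Γ, and let w be its weight vector. Then, as functions V → ℤ, w = Σ_{T ∈ 𝒯} (Σ_{v ∈ T} w(v)) · (1_{v_T} − 1_{v_{σ(T)}}) + 3^{|V|−2} · 1_{v_V}, where for each T ∈ 𝒯 ∪ {V}, v_T is the unique vertex of T not contained in any element of 𝒯 properly contained in T, and σ(T) is the minimal element of 𝒯 ∪ {V} properly containing T. (Equivalently, for positive reals (x_v)_{v∈V}: ∏_v x_v^{w(v)} = ∏_{T∈𝒯} (x_{v_T}/x_{v_{σ(T)}})^{Σ_{v∈T} w(v)} · x_{v_V}^{3^{|V|−2}}.) -/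
variable {V : Type*} [Fintype V] [DecidableEq V]

/-- The indicator function of a vertex, with values in `ℤ`. -/
def indic (a u : V) : ℤ := if u = a then 1 else 0

lemma tubing_chain {G : SimpleGraph V} {𝒯 : Finset (Finset V)} (h : IsTubing G 𝒯)
    {S S' : Finset V} (hS : S ∈ insert Finset.univ 𝒯) (hS' : S' ∈ insert Finset.univ 𝒯)
    {v : V} (hv : v ∈ S) (hv' : v ∈ S') : S ⊆ S' ∨ S' ⊆ S := by
  rcases Finset.mem_insert.1 hS with rfl | hS2
  · right; exact Finset.subset_univ _
  rcases Finset.mem_insert.1 hS' with rfl | hS2'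
  · left; exact Finset.subset_univ _
  by_cases he : S = S'
  · left; exact he ▸ Finset.Subset.refl _
  rcases h.2 S hS2 S' hS2' he with h1 | h1 | h1
  · left; exact h1.subset
  · right; exact h1.subset
  · exact absurd hv' (h1.1 v hv)

lemma root_unique {G : SimpleGraph V} {𝒯 : Finset (Finset V)} (h : IsMaxTubing G 𝒯)
    {T : Finset V} (hT : T ∈ insert Finset.univ 𝒯)
    {u u' : V} (hu : u ∈ T) (hu' : u' ∈ T)
    (hru : ∀ S ∈ 𝒯, S ⊂ T → u ∉ S) (hru' : ∀ S ∈ 𝒯, S ⊂ T → u' ∉ S) :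
    u = u' := by
  classical
  by_contra hne
  set r : V → V → Prop := fun x y => x ∈ T.erase u' ∧ y ∈ T.erase u' ∧ G.Adj x y with hrdef
  set C : Finset V := (T.erase u').filter (fun v => Relation.ReflTransGen r u v) with hCdef
  have huE : u ∈ T.erase u' := Finset.mem_erase.2 ⟨hne, hu⟩
  have huC : u ∈ C := Finset.mem_filter.2 ⟨huE, Relation.ReflTransGen.refl⟩
  have hCsub : ∀ x ∈ C, x ∈ T.erase u' := fun x hx => (Finset.mem_filter.1 hx).1
  have hCrtg : ∀ x ∈ C, Relation.ReflTransGen r u x := fun x hx => (Finset.mem_filter.1 hx).2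
  have hclosed : ∀ x ∈ C, ∀ y, r x y → y ∈ C := by
    intro x hx y hxy
    exact Finset.mem_filter.2 ⟨hxy.2.1, (hCrtg x hx).tail hxy⟩
  have hCT : C ⊂ T := by
    refine Finset.ssubset_iff_of_subset (fun x hx => (Finset.mem_erase.1 (hCsub x hx)).2) |>.2 ?_
    exact ⟨u', hu', fun hc => (Finset.mem_erase.1 (hCsub u' hc)).1 rfl⟩
  have key : ∀ S : Finset V, (G.induce (S : Set V)).Connected →
      (∀ x ∈ S, x ∈ T.erase u') → ∀ v ∈ S, v ∈ C → ∀ x ∈ S, x ∈ C := by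
    intro S hcon hsub v hv hvC x hxS
    obtain ⟨p⟩ := hcon.preconnected ⟨v, hv⟩ ⟨x, hxS⟩
    have walkrtg : ∀ {a b : (S : Set V)} (_ : (G.induce (S : Set V)).Walk a b),
        Relation.ReflTransGen r (a : V) (b : V) := by
      intro a b p
      induction p with
      | nil => exact Relation.ReflTransGen.refl
      | cons hadj _ ih =>
        refine Relation.ReflTransGen.head ⟨?_, ?_, ?_⟩ ih
        · exact hsub _ (Finset.mem_coe.1 (Subtype.mem _))
        · exact hsub _ (Finset.mem_coe.1 (Subtype.mem _))
        · exact hadj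
    exact Finset.mem_filter.2 ⟨hsub x hxS, (hCrtg v hvC).trans (walkrtg p)⟩
  have hreachC : ∀ v, Relation.ReflTransGen r u v → ∀ hv : v ∈ C,
      (G.induce (C : Set V)).Reachable ⟨u, Finset.mem_coe.2 huC⟩ ⟨v, Finset.mem_coe.2 hv⟩ := by
    intro v hrtg
    induction hrtg with
    | refl => intro _; exact SimpleGraph.Reachable.refl _
    | @tail b c h1 h2 ih =>
      intro hv
      have hbC : b ∈ C := Finset.mem_filter.2 ⟨h2.1, h1⟩
      have hadj : (G.induce (C : Set V)).Adj ⟨b, Finset.mem_coe.2 hbC⟩ ⟨c, Finset.mem_coe.2 hv⟩ :=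
        h2.2.2
      exact (ih hbC).trans hadj.reachable
  have hCtube : IsTube G C := by
    refine ⟨⟨u, huC⟩, ?_, ?_⟩
    · intro hEq
      have : u' ∈ C := hEq ▸ Finset.mem_univ u'
      exact (Finset.mem_erase.1 (hCsub u' this)).1 rfl
    · rw [SimpleGraph.connected_iff]
      refine ⟨?_, ⟨⟨u, Finset.mem_coe.2 huC⟩⟩⟩
      rintro ⟨a, ha⟩ ⟨b, hb⟩
      have ha' := Finset.mem_coe.1 ha
      have hb' := Finset.mem_coe.1 hb
      exact (hreachC a (hCrtg a ha') ha').symm.trans (hreachC b (hCrtg b hb') hb')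
  have compat : ∀ S ∈ 𝒯, S ≠ C →
      (C ⊂ S ∨ S ⊂ C ∨ ((∀ v ∈ C, v ∉ S) ∧ ∀ a ∈ C, ∀ b ∈ S, ¬ G.Adj a b)) := by
    intro S hS hSC
    have hStube := h.1.1 S hS
    have hcase : S ⊂ T ∨ T ⊆ S ∨ ((∀ v ∈ S, v ∉ T) ∧ ∀ a ∈ S, ∀ b ∈ T, ¬ G.Adj a b) := by
      rcases Finset.mem_insert.1 hT with rfl | hT'
      · left; exact Finset.ssubset_univ_iff.2 hStube.2.1
      · by_cases hST : S = T
        · right; left; exact hST.ge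
        rcases h.1.2 S hS T hT' hST with h1 | h1 | h1
        · left; exact h1
        · right; left; exact h1.subset
        · right; right; exact h1
    rcases hcase with hsub | hsub | ⟨hdisj, hnoedge⟩
    · have hSE : ∀ x ∈ S, x ∈ T.erase u' := fun x hx =>
        Finset.mem_erase.2 ⟨fun hxe => hru' S hS hsub (hxe ▸ hx), hsub.subset hx⟩
      by_cases hmeet : ∃ v ∈ S, v ∈ C
      · obtain ⟨v, hvS, hvC⟩ := hmeet
        right; left
        exact Finset.ssubset_iff_subset_ne.2
          ⟨fun x hx => key S hStube.2.2 hSE v hvS hvC x hx, hSC⟩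
      · push_neg at hmeet
        right; right
        refine ⟨fun v hvC hvS => hmeet v hvS hvC, ?_⟩
        intro a haC b hbS hadj
        exact hmeet b hbS (hclosed a haC b ⟨hCsub a haC, hSE b hbS, hadj⟩)
    · left; exact lt_of_lt_of_le hCT hsub
    · right; right
      refine ⟨?_, ?_⟩
      · intro v hvC hvS
        exact hdisj v hvS (Finset.mem_erase.1 (hCsub v hvC)).2
      · intro a haC b hbS hadj
        exact hnoedge b hbS a (Finset.mem_erase.1 (hCsub a haC)).2 hadj.symm
  have htub : IsTubing G (insert C 𝒯) := by
    constructor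
    · intro S hS
      rcases Finset.mem_insert.1 hS with rfl | hS
      · exact hCtube
      · exact h.1.1 S hS
    · intro A hA B hB hAB
      rcases Finset.mem_insert.1 hA with rfl | hA
      · rcases Finset.mem_insert.1 hB with rfl | hB
        · exact absurd rfl hAB
        · exact compat B hB (fun e => hAB e.symm)
      · rcases Finset.mem_insert.1 hB with rfl | hB
        · rcases compat A hA hAB with h1 | h1 | h1
          · right; left; exact h1
          · left; exact h1
          · right; right
            exact ⟨fun v hvA hvB => h1.1 v hvB hvA,
              fun a haA b hbB hadj => h1.2 b hbB a haA hadj.symm⟩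
        · exact h.1.2 A hA B hB hAB
  have hC𝒯 : C ∈ 𝒯 := by
    have := h.2 (insert C 𝒯) htub (Finset.subset_insert _ _)
    exact this ▸ Finset.mem_insert_self C 𝒯
  exact hru C hC𝒯 hCT huC

lemma exists_min_tube {G : SimpleGraph V} {𝒯 : Finset (Finset V)} (h : IsTubing G 𝒯) (v : V) :
    ∃ M ∈ insert Finset.univ 𝒯, v ∈ M ∧ ∀ S ∈ insert Finset.univ 𝒯, v ∈ S → M ⊆ S := by
  classical
  set F := (insert Finset.univ 𝒯).filter (fun S => v ∈ S) with hF
  have hne : F.Nonempty :=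
    ⟨Finset.univ, Finset.mem_filter.2 ⟨Finset.mem_insert_self _ _, Finset.mem_univ v⟩⟩
  obtain ⟨M, hM, hMmin⟩ := F.exists_min_image Finset.card hne
  have hM' := Finset.mem_filter.1 hM
  refine ⟨M, hM'.1, hM'.2, ?_⟩
  intro S hS hvS
  rcases tubing_chain h hM'.1 hS hM'.2 hvS with h1 | h1
  · exact h1
  · exact le_of_eq (Finset.eq_of_subset_of_card_le h1
      (hMmin S (Finset.mem_filter.2 ⟨hS, hvS⟩))).symm

theorem weight_vector_decomposition
    (G : SimpleGraph V) (hG : G.Connected) (hV : 2 ≤ Fintype.card V)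
    (𝒯 : Finset (Finset V)) (h : IsMaxTubing G 𝒯)
    (w : V → ℤ) (hw : IsWeightVector 𝒯 w)
    (vT : Finset V → V)
    (hvT : ∀ T ∈ insert Finset.univ 𝒯,
      vT T ∈ T ∧ ∀ S ∈ 𝒯, S ⊂ T → vT T ∉ S)
    (σ : Finset V → Finset V)
    (hσ : ∀ T ∈ 𝒯, σ T ∈ insert Finset.univ 𝒯 ∧ T ⊂ σ T ∧
      ∀ S ∈ insert Finset.univ 𝒯, T ⊂ S → σ T ⊆ S) :
    ∀ u : V,
      w u = (∑ T ∈ 𝒯, (∑ v ∈ T, w v) * (indic (vT T) u - indic (vT (σ T)) u))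
        + 3 ^ (Fintype.card V - 2) * indic (vT Finset.univ) u := by
  classical
  -- sum of all weights is 3^(n-2)
  have hsum_univ : ∑ v : V, w v = 3 ^ (Fintype.card V - 2) := by
    have hrtmem := hvT Finset.univ (Finset.mem_insert_self _ _)
    set rt := vT Finset.univ with hrt
    have hmin : ∀ S ∈ insert Finset.univ 𝒯, rt ∈ S → Finset.univ ⊆ S := by
      intro S hS hrtS
      rcases Finset.mem_insert.1 hS with rfl | hS'
      · exact Finset.Subset.refl _
      · exact absurd hrtS (hrtmem.2 S hS'
          (Finset.ssubset_univ_iff.2 (h.1.1 S hS').2.1))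
    have hrec := (hw rt Finset.univ (Finset.mem_insert_self _ _) (Finset.mem_univ rt) hmin).2
      (by simpa using hV)
    have h2 : ∑ v : V, w v = w rt + ∑ v' ∈ Finset.univ.erase rt, w v' :=
      (Finset.add_sum_erase _ _ (Finset.mem_univ rt)).symm
    rw [Finset.card_univ] at hrec
    linarith
  intro u
  obtain ⟨M, hM, huM, hMmin⟩ := exists_min_tube h.1 u
  have hrootu : ∀ S ∈ 𝒯, S ⊂ M → u ∉ S := fun S hS hSM huS =>
    hSM.not_subset (hMmin S (Finset.mem_insert_of_mem hS) huS)
  have hvTM := hvT M hM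
  have huvT : u = vT M := root_unique h hM huM hvTM.1 hrootu hvTM.2
  have F1 : ∀ T ∈ insert Finset.univ 𝒯, (u = vT T ↔ T = M) := by
    intro T hT
    constructor
    · intro he
      have huT : u ∈ T := he ▸ (hvT T hT).1
      have hMT : M ⊆ T := hMmin T hT huT
      by_contra hne
      have hMssub : M ⊂ T := hMT.ssubset_of_ne (fun e => hne e.symm)
      have hM𝒯 : M ∈ 𝒯 := by
        rcases Finset.mem_insert.1 hM with rfl | hM'
        · exact absurd (Finset.subset_univ T) hMssub.not_subset
        · exact hM'
      exact (hvT T hT).2 M hM𝒯 hMssub (he ▸ huM)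
    · rintro rfl; exact huvT
  set K := 𝒯.filter (fun T => σ T = M) with hK
  have hKsub : ∀ T ∈ K, T ⊆ M.erase u := by
    intro T hT x hx
    have hT' := Finset.mem_filter.1 hT
    have hTM : T ⊂ M := hT'.2 ▸ (hσ T hT'.1).2.1
    refine Finset.mem_erase.2 ⟨?_, hTM.subset hx⟩
    rintro rfl
    exact hTM.not_subset (hMmin T (Finset.mem_insert_of_mem hT'.1) hx)
  have hKcover : ∀ x ∈ M.erase u, ∃ T ∈ K, x ∈ T := by
    intro v hv
    obtain ⟨hvne, hvM⟩ := Finset.mem_erase.1 hv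
    set F := 𝒯.filter (fun S => v ∈ S ∧ S ⊂ M) with hF
    have hFne : F.Nonempty := by
      by_contra hemp
      rw [Finset.not_nonempty_iff_eq_empty] at hemp
      have hrootv : ∀ S ∈ 𝒯, S ⊂ M → v ∉ S := by
        intro S hS hSM hvS
        have : S ∈ F := Finset.mem_filter.2 ⟨hS, hvS, hSM⟩
        simp [hemp] at this
      have : v = vT M := root_unique h hM hvM hvTM.1 hrootv hvTM.2
      exact hvne (this.trans huvT.symm)
    obtain ⟨T0, hT0, hT0max⟩ := F.exists_max_image Finset.card hFne
    have hT0' := Finset.mem_filter.1 hT0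
    have hσT0 := hσ T0 hT0'.1
    have hσsub : σ T0 ⊆ M := hσT0.2.2 M hM hT0'.2.2
    have hσeq : σ T0 = M := by
      by_contra hne2
      have hσss : σ T0 ⊂ M := hσsub.ssubset_of_ne hne2
      have hσ𝒯 : σ T0 ∈ 𝒯 := by
        rcases Finset.mem_insert.1 hσT0.1 with he | h'
        · exact absurd (Finset.subset_univ M) (he ▸ hσss).not_subset
        · exact h'
      have hmem : σ T0 ∈ F := Finset.mem_filter.2 ⟨hσ𝒯, hσT0.2.1.subset hT0'.2.1, hσss⟩
      exact absurd (Finset.card_lt_card hσT0.2.1) (not_lt.2 (hT0max _ hmem))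
    exact ⟨T0, Finset.mem_filter.2 ⟨hT0'.1, hσeq⟩, hT0'.2.1⟩
  have hKdisj : ∀ T ∈ K, ∀ T' ∈ K, T ≠ T' → Disjoint T T' := by
    intro T hT T' hT' hne
    have hT1 := Finset.mem_filter.1 hT
    have hT2 := Finset.mem_filter.1 hT'
    rcases h.1.2 T hT1.1 T' hT2.1 hne with h1 | h1 | h1
    · exfalso
      have hMs : σ T ⊆ T' := (hσ T hT1.1).2.2 T' (Finset.mem_insert_of_mem hT2.1) h1
      rw [hT1.2] at hMs
      exact (hT2.2 ▸ (hσ T' hT2.1).2.1 : T' ⊂ M).not_subset hMs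
    · exfalso
      have hMs : σ T' ⊆ T := (hσ T' hT2.1).2.2 T (Finset.mem_insert_of_mem hT1.1) h1
      rw [hT2.2] at hMs
      exact (hT1.2 ▸ (hσ T hT1.1).2.1 : T ⊂ M).not_subset hMs
    · exact Finset.disjoint_left.2 (fun a ha ha' => h1.1 a ha ha')
  have hpart : M.erase u = K.biUnion id := by
    ext x
    simp only [Finset.mem_biUnion, id]
    exact ⟨hKcover x, fun ⟨T, hT, hxT⟩ => hKsub T hT hxT⟩
  have hsum_erase : ∑ v' ∈ M.erase u, w v' = ∑ T ∈ K, ∑ v ∈ T, w v := by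
    rw [hpart]
    exact Finset.sum_biUnion (fun T hT T' hT' hne =>
      hKdisj T (Finset.mem_coe.1 hT) T' (Finset.mem_coe.1 hT') hne)
  have hindic : ∀ T ∈ insert Finset.univ 𝒯, indic (vT T) u = if T = M then 1 else 0 := by
    intro T hT
    rcases eq_or_ne T M with rfl | he
    · rw [if_pos rfl, indic, if_pos huvT]
    · rw [if_neg he, indic, if_neg (fun hc => he ((F1 T hT).1 hc))]
  have hstep : ∀ T ∈ 𝒯, (∑ v ∈ T, w v) * (indic (vT T) u - indic (vT (σ T)) u)
      = (if T = M then (∑ v ∈ T, w v) else 0) - (if σ T = M then (∑ v ∈ T, w v) else 0) := by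
    intro T hT
    rw [hindic T (Finset.mem_insert_of_mem hT), hindic (σ T) (hσ T hT).1]
    by_cases h1 : T = M <;> by_cases h2 : σ T = M <;> split_ifs <;> simp [h1, h2] <;> ring
  rw [Finset.sum_congr rfl hstep, Finset.sum_sub_distrib, Finset.sum_ite_eq' 𝒯 M,
    ← Finset.sum_filter, ← hK, ← hsum_erase,
    hindic Finset.univ (Finset.mem_insert_self _ _)]
  rcases Finset.mem_insert.1 hM with he | hM𝒯
  · rw [if_neg (fun hc : M ∈ 𝒯 => (h.1.1 M hc).2.1 he), if_pos he.symm]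
    have h2 : ∑ v : V, w v = w u + ∑ v' ∈ M.erase u, w v' := by
      rw [← he]; exact (Finset.add_sum_erase _ _ huM).symm
    rw [hsum_univ] at h2
    linarith
  · rw [if_pos hM𝒯, if_neg (fun hc : Finset.univ = M => (h.1.1 M hM𝒯).2.1 hc.symm)]
    have h2 : ∑ v ∈ M, w v = w u + ∑ v' ∈ M.erase u, w v' :=
      (Finset.add_sum_erase _ _ huM).symm
    linarith
end

section
/- Let Γ be a finite connected simple graph with vertex set V, let 𝒯 and 𝒯̃ be maximal tubings of Γ, and let w and w̃ be their weight vectors. Then for every tube T ∈ 𝒯, one has Σ_{v ∈ T} w̃(v) ≥ Σ_{v ∈ T} w(v); moreover equality holds if T ∈ 𝒯̃, and the inequality is strict if T ∉ 𝒯̃. -/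
set_option linter.unusedSectionVars false
set_option maxHeartbeats 800000


variable {V : Type*} [Fintype V] [DecidableEq V]

/-- the size-based weight function -/
def fw (n : ℕ) : ℤ := if n ≤ 1 then 0 else 3 ^ (n - 2)

lemma fw_nonneg (n : ℕ) : 0 ≤ fw n := by
  unfold fw; split <;> positivity

lemma fw_one : fw 1 = 0 := rfl

lemma fw_of_two_le {n : ℕ} (h : 2 ≤ n) : fw n = 3 ^ (n - 2) := by
  unfold fw; rw [if_neg (by omega)]

lemma fw_mono : Monotone fw := by
  intro a b hab
  unfold fw
  split
  · split
    · exact le_refl _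
    · positivity
  · rw [if_neg (by omega)]
    exact pow_le_pow_right₀ (by norm_num) (by omega)

lemma fw_superadd {a b : ℕ} (ha : 1 ≤ a) (hb : 1 ≤ b) : fw a + fw b ≤ fw (a + b) := by
  rcases Nat.lt_or_ge a 2 with h2 | h2
  · interval_cases a
    simp only [fw_one, zero_add]
    exact fw_mono (by omega)
  rcases Nat.lt_or_ge b 2 with h2' | h2'
  · interval_cases b
    simp only [fw_one, add_zero]
    exact fw_mono (by omega)
  rw [fw_of_two_le h2, fw_of_two_le h2', fw_of_two_le (by omega)]
  have e1 : (3:ℤ) ^ (a - 2) ≤ 3 ^ (a + b - 3) := pow_le_pow_right₀ (by norm_num) (by omega)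
  have e2 : (3:ℤ) ^ (b - 2) ≤ 3 ^ (a + b - 3) := pow_le_pow_right₀ (by norm_num) (by omega)
  have e3 : (3:ℤ) ^ (a + b - 3) * 3 = 3 ^ (a + b - 2) := by
    rw [← pow_succ]; congr 1; omega
  nlinarith [pow_nonneg (by norm_num : (0:ℤ) ≤ 3) (a + b - 3)]

lemma fw_double_lt {s : ℕ} (hs : 2 ≤ s) : 2 * fw (s - 1) < fw s := by
  rcases Nat.lt_or_ge s 3 with h3 | h3
  · interval_cases s
    norm_num [fw]
  rw [fw_of_two_le (by omega), fw_of_two_le (by omega)]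
  have e3 : (3:ℤ) ^ (s - 3) * 3 = 3 ^ (s - 2) := by
    rw [← pow_succ]; congr 1; omega
  have : (s:ℕ) - 1 - 2 = s - 3 := by omega
  rw [this]
  nlinarith [pow_pos (by norm_num : (0:ℤ) < 3) (s - 3)]

/-- Reachability within a finset of vertices. -/
inductive ReachIn (G : SimpleGraph V) (B : Finset V) : V → V → Prop
  | refl {u : V} (hu : u ∈ B) : ReachIn G B u u
  | tail {u v w : V} (h : ReachIn G B u v) (hadj : G.Adj v w) (hw : w ∈ B) : ReachIn G B u w

namespace ReachIn

variable {G : SimpleGraph V} {B : Finset V}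

lemma mem_right {u v : V} (h : ReachIn G B u v) : v ∈ B := by
  cases h with
  | refl hu => exact hu
  | tail _ _ hw => exact hw

lemma mem_left {u v : V} (h : ReachIn G B u v) : u ∈ B := by
  induction h with
  | refl hu => exact hu
  | tail _ _ _ ih => exact ih

lemma trans {u v x : V} (h : ReachIn G B u v) (h' : ReachIn G B v x) : ReachIn G B u x := by
  induction h' with
  | refl _ => exact h
  | tail _ hadj hw ih => exact .tail ih hadj hw

lemma single {u v : V} (hu : u ∈ B) (hadj : G.Adj u v) (hv : v ∈ B) : ReachIn G B u v :=
  .tail (.refl hu) hadj hv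

lemma symm {u v : V} (h : ReachIn G B u v) : ReachIn G B v u := by
  induction h with
  | refl hu => exact .refl hu
  | tail h hadj hw ih => exact trans (single hw hadj.symm h.mem_right) ih

lemma mono {B' : Finset V} (hBB : B ⊆ B') {u v : V} (h : ReachIn G B u v) :
    ReachIn G B' u v := by
  induction h with
  | refl hu => exact .refl (hBB hu)
  | tail _ hadj hw ih => exact .tail ih hadj (hBB hw)

end ReachIn

/-- All pairs of vertices of `B` are connected within `B`. -/
def Conn (G : SimpleGraph V) (B : Finset V) : Prop :=
  ∀ u ∈ B, ∀ v ∈ B, ReachIn G B u v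

variable {G : SimpleGraph V}

lemma reachIn_of_walk {B : Finset V} {u v : (B : Set V)}
    (p : (G.induce (B : Set V)).Walk u v) : ReachIn G B u.1 v.1 := by
  induction p with
  | nil => rename_i x; exact .refl (Finset.mem_coe.mp x.2)
  | @cons a b c hadj _ ih =>
    exact ReachIn.trans
      (ReachIn.single (Finset.mem_coe.mp a.2) hadj (Finset.mem_coe.mp b.2)) ih

lemma conn_of_induce {B : Finset V} (h : (G.induce (B : Set V)).Connected) : Conn G B := by
  intro u hu v hv
  obtain ⟨p⟩ := h.preconnected ⟨u, by simpa using hu⟩ ⟨v, by simpa using hv⟩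
  exact reachIn_of_walk p

lemma reachable_induce_of_reachIn {B : Finset V} {x y : V} (hr : ReachIn G B x y) :
    ∀ (hx : x ∈ (B : Set V)) (hy : y ∈ (B : Set V)),
      (G.induce (B : Set V)).Reachable ⟨x, hx⟩ ⟨y, hy⟩ := by
  induction hr with
  | refl hu => intro hx hy; rfl
  | @tail b c h hadj hc ih =>
    intro hx hy
    exact (ih hx (Finset.mem_coe.mpr h.mem_right)).trans
      (SimpleGraph.Adj.reachable (by exact hadj))

lemma induce_connected_of_conn {B : Finset V} (hne : B.Nonempty) (h : Conn G B) :
    (G.induce (B : Set V)).Connected := by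
  rw [SimpleGraph.connected_iff]
  refine ⟨fun x y => ?_, ⟨⟨hne.choose, by simpa using hne.choose_spec⟩⟩⟩
  have hr : ReachIn G B x.1 y.1 := h x.1 (Finset.mem_coe.mp x.2) y.1 (Finset.mem_coe.mp y.2)
  have := reachable_induce_of_reachIn hr x.2 y.2
  simpa using this

lemma reachIn_univ_of_walk {u v : V} (p : G.Walk u v) :
    ReachIn G (Finset.univ : Finset V) u v := by
  induction p with
  | nil => exact .refl (Finset.mem_univ _)
  | @cons a b c hadj _ ih =>
    exact ReachIn.trans (ReachIn.single (Finset.mem_univ _) hadj (Finset.mem_univ _)) ih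

lemma conn_univ (hG : G.Connected) : Conn G (Finset.univ : Finset V) := by
  intro u _ v _
  obtain ⟨p⟩ := hG.preconnected u v
  exact reachIn_univ_of_walk p

/-! Tubing lemmas -/

lemma tube_conn {T : Finset V} (h : IsTube G T) : Conn G T := conn_of_induce h.2.2

/-- Two tubes of a tubing sharing a vertex are nested. -/
lemma nested_of_mem {𝒯 : Finset (Finset V)} (ht : IsTubing G 𝒯) {A B : Finset V}
    (hA : A ∈ 𝒯) (hB : B ∈ 𝒯) {v : V} (hvA : v ∈ A) (hvB : v ∈ B) : A ⊆ B ∨ B ⊆ A := by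
  rcases eq_or_ne A B with rfl | hne
  · exact Or.inl le_rfl
  rcases ht.2 A hA B hB hne with h | h | h
  · exact Or.inl h.subset
  · exact Or.inr h.subset
  · exact absurd hvB (h.1 v hvA)

/-- Nestedness for members of `insert univ 𝒯`. -/
lemma nested_of_mem' {𝒯 : Finset (Finset V)} (ht : IsTubing G 𝒯) {A B : Finset V}
    (hA : A ∈ insert Finset.univ 𝒯) (hB : B ∈ insert Finset.univ 𝒯) {v : V}
    (hvA : v ∈ A) (hvB : v ∈ B) : A ⊆ B ∨ B ⊆ A := by
  rcases Finset.mem_insert.mp hA with rfl | hA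
  · exact Or.inr (Finset.subset_univ _)
  rcases Finset.mem_insert.mp hB with rfl | hB
  · exact Or.inl (Finset.subset_univ _)
  exact nested_of_mem ht hA hB hvA hvB

def IsRoot (𝒯 : Finset (Finset V)) (S : Finset V) (r : V) : Prop :=
  r ∈ S ∧ ∀ A ∈ 𝒯, A ⊂ S → r ∉ A

/-- The maximal proper subtubes of `S` in `𝒯`. -/
def maxSubs (𝒯 : Finset (Finset V)) (S : Finset V) : Finset (Finset V) :=
  𝒯.filter (fun A => A ⊂ S ∧ ∀ B ∈ 𝒯, A ⊆ B → B ⊂ S → B = A)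

lemma maxSubs_mem {𝒯 : Finset (Finset V)} {S A : Finset V} (h : A ∈ maxSubs 𝒯 S) :
    A ∈ 𝒯 ∧ A ⊂ S ∧ ∀ B ∈ 𝒯, A ⊆ B → B ⊂ S → B = A := by
  simpa [maxSubs] using h

lemma exists_maxSub {𝒯 : Finset (Finset V)} {S A : Finset V} (hA : A ∈ 𝒯) (hAS : A ⊂ S) :
    ∃ C ∈ maxSubs 𝒯 S, A ⊆ C := by
  classical
  set s : Finset (Finset V) := 𝒯.filter (fun B => A ⊆ B ∧ B ⊂ S) with hs
  have hmemA : A ∈ s := by simp [hs, hA, hAS]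
  obtain ⟨m, hm, hmax⟩ : ∃ m ∈ s, ∀ x ∈ s, ¬ m < x := by
    obtain ⟨m, hm⟩ := Finset.exists_maximal ⟨A, hmemA⟩
    exact ⟨m, hm.1, fun x hx hlt => lt_irrefl _ (lt_of_lt_of_le hlt (hm.2 hx hlt.le))⟩
  simp only [hs, Finset.mem_filter] at hm
  refine ⟨m, ?_, hm.2.1⟩
  simp only [maxSubs, Finset.mem_filter]
  refine ⟨hm.1, hm.2.2, fun B hB hmB hBS => ?_⟩
  by_contra hne
  exact hmax B (by simp [hs, hB, hm.2.1.trans hmB, hBS])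
    (lt_of_le_of_ne hmB (fun e => hne e.symm))

/-- Distinct maximal proper subtubes are disjoint with no edges between them. -/
lemma maxSubs_pairwise {𝒯 : Finset (Finset V)} (ht : IsTubing G 𝒯) {S A B : Finset V}
    (hA : A ∈ maxSubs 𝒯 S) (hB : B ∈ maxSubs 𝒯 S) (hne : A ≠ B) :
    (∀ v ∈ A, v ∉ B) ∧ ∀ u ∈ A, ∀ v ∈ B, ¬ G.Adj u v := by
  obtain ⟨hA𝒯, hAS, hAmax⟩ := maxSubs_mem hA
  obtain ⟨hB𝒯, hBS, hBmax⟩ := maxSubs_mem hB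
  rcases ht.2 A hA𝒯 B hB𝒯 hne with h | h | h
  · exact absurd (hAmax B hB𝒯 h.subset hBS).symm hne
  · exact absurd (hBmax A hA𝒯 h.subset hAS) hne
  · exact h

/-- A connected set inside a union of pairwise separated sets lies in one of them. -/
lemma subset_of_sep {M : Finset (Finset V)}
    (hpair : ∀ C ∈ M, ∀ C' ∈ M, C ≠ C' →
      (∀ v ∈ C, v ∉ C') ∧ ∀ u ∈ C, ∀ v ∈ C', ¬ G.Adj u v)
    {T : Finset V} (hTne : T.Nonempty) (hTc : Conn G T)
    (hTM : ∀ v ∈ T, ∃ C ∈ M, v ∈ C) : ∃ C ∈ M, T ⊆ C := by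
  obtain ⟨v0, hv0⟩ := hTne
  obtain ⟨C, hC, hv0C⟩ := hTM v0 hv0
  refine ⟨C, hC, fun u hu => ?_⟩
  have hr : ReachIn G T v0 u := hTc v0 hv0 u hu
  clear hu
  induction hr with
  | refl _ => exact hv0C
  | @tail b c h hadj hc ih =>
    obtain ⟨C', hC', hcC'⟩ := hTM c hc
    rcases eq_or_ne C C' with rfl | hne
    · exact hcC'
    · exact absurd hadj ((hpair C hC C' hC' hne).2 b ih c hcC')

/-- Every element of `insert univ 𝒯` has a root. -/
lemma root_exists {𝒯 : Finset (Finset V)} (ht : IsTubing G 𝒯) {S : Finset V}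
    (hSne : S.Nonempty) (hSc : Conn G S) : ∃ r, IsRoot 𝒯 S r := by
  by_contra hno
  push_neg at hno
  simp only [IsRoot, not_and, not_forall] at hno
  have hcov : ∀ v ∈ S, ∃ C ∈ maxSubs 𝒯 S, v ∈ C := by
    intro v hv
    obtain ⟨A, hA, hAS, hvA⟩ := hno v hv
    simp only [not_not] at hvA
    obtain ⟨C, hC, hAC⟩ := exists_maxSub hA hAS
    exact ⟨C, hC, hAC hvA⟩
  obtain ⟨C, hC, hSC⟩ := subset_of_sep (fun C hC C' hC' => maxSubs_pairwise ht hC hC')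
    hSne hSc hcov
  exact (Finset.ssubset_def.mp (maxSubs_mem hC).2.1).2 hSC

/-- The root of `S` sees `S` as the minimal element of `insert univ 𝒯` containing it. -/
lemma root_min {𝒯 : Finset (Finset V)} (ht : IsTubing G 𝒯) {S : Finset V} {r : V}
    (hS : S ∈ insert Finset.univ 𝒯) (hr : IsRoot 𝒯 S r) :
    ∀ S' ∈ insert Finset.univ 𝒯, r ∈ S' → S ⊆ S' := by
  intro S' hS' hrS'
  rcases Finset.mem_insert.mp hS' with rfl | hS'𝒯
  · exact Finset.subset_univ _
  have htube := ht.1 S' hS'𝒯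
  rcases nested_of_mem' ht hS (Finset.mem_insert_of_mem hS'𝒯) hr.1 hrS' with h | h
  · exact h
  · rcases eq_or_ne S' S with rfl | hne
    · exact subset_rfl
    · exact absurd hrS' (hr.2 S' hS'𝒯 (Finset.ssubset_iff_subset_ne.mpr ⟨h, hne⟩))

/-- Sum of weights over an element of `insert univ 𝒯` is `fw` of its size. -/
lemma sum_tube {𝒯 : Finset (Finset V)} (ht : IsTubing G 𝒯) (hG : G.Connected)
    {w : V → ℤ} (hw : IsWeightVector 𝒯 w) {S : Finset V}
    (hS : S ∈ insert Finset.univ 𝒯) : ∑ v ∈ S, w v = fw S.card := by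
  have hSne : S.Nonempty := by
    rcases Finset.mem_insert.mp hS with rfl | hS𝒯
    · have : Nonempty V := hG.nonempty
      exact Finset.univ_nonempty
    · exact (ht.1 S hS𝒯).1
  have hSc : Conn G S := by
    rcases Finset.mem_insert.mp hS with rfl | hS𝒯
    · exact conn_univ hG
    · exact tube_conn (ht.1 S hS𝒯)
  obtain ⟨r, hr⟩ := root_exists ht hSne hSc
  have hmin := root_min ht hS hr
  have h2 := hw r S hS hr.1 hmin
  rcases Nat.lt_or_ge S.card 2 with hc | hc
  · have hc1 : S.card = 1 := by
      have := Finset.card_pos.mpr hSne; omega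
    obtain ⟨v, hv⟩ := Finset.card_eq_one.mp hc1
    subst hv
    have : r = v := by simpa using hr.1
    subst this
    rw [Finset.sum_singleton, h2.1 rfl, hc1, fw_one]
  · have heq := h2.2 hc
    rw [← Finset.add_sum_erase _ _ hr.1, heq, fw_of_two_le hc]
    ring

/-- In a maximal tubing, every non-root vertex of `S` lies in a proper subtube. -/
lemma root_unique_s13 {𝒯 : Finset (Finset V)} (h' : IsMaxTubing G 𝒯) {S : Finset V}
    (hS : S ∈ insert Finset.univ 𝒯) {r : V} (hr : IsRoot 𝒯 S r) {u : V}
    (hu : u ∈ S) (hune : u ≠ r) : ∃ A ∈ 𝒯, A ⊂ S ∧ u ∈ A := by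
  classical
  have ht := h'.1
  by_contra hno
  push_neg at hno
  -- hno : ∀ A ∈ 𝒯, A ⊂ S → u ∉ A
  set B : Finset V := S.erase r with hB
  have hub : u ∈ B := Finset.mem_erase.mpr ⟨hune, hu⟩
  set T0 : Finset V := B.filter (fun x => ReachIn G B u x) with hT0
  have memT0 : ∀ x, x ∈ T0 ↔ x ∈ B ∧ ReachIn G B u x := by
    intro x; simp [hT0]
  have hu0 : u ∈ T0 := (memT0 u).mpr ⟨hub, .refl hub⟩
  have hT0B : T0 ⊆ B := Finset.filter_subset _ _
  have hclosed : ∀ x ∈ T0, ∀ y, ReachIn G B x y → y ∈ T0 := by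
    intro x hx y hxy
    exact (memT0 y).mpr ⟨hxy.mem_right, ((memT0 x).mp hx).2.trans hxy⟩
  have hrestrict : ∀ y, ReachIn G B u y → ReachIn G T0 u y := by
    intro y hy
    induction hy with
    | refl _ => exact .refl hu0
    | @tail b c h hadj hc ih =>
      exact .tail ih hadj ((memT0 c).mpr ⟨hc, .tail h hadj hc⟩)
  have hconn : Conn G T0 := by
    intro x hx y hy
    exact (hrestrict x ((memT0 x).mp hx).2).symm.trans (hrestrict y ((memT0 y).mp hy).2)
  have hrT0 : r ∉ T0 := fun hrr => (Finset.mem_erase.mp (hT0B hrr)).1 rfl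
  have hT0S : T0 ⊂ S := by
    refine Finset.ssubset_iff_subset_ne.mpr ⟨(hT0B.trans (Finset.erase_subset _ _)), ?_⟩
    intro e; exact hrT0 (e ▸ hr.1)
  have htube0 : IsTube G T0 := by
    refine ⟨⟨u, hu0⟩, fun e => hrT0 (e ▸ Finset.mem_univ r), induce_connected_of_conn ⟨u, hu0⟩ hconn⟩
  have hT0not : T0 ∉ 𝒯 := fun hmem => hno T0 hmem hT0S hu0
  -- compatibility of T0 with every tube of 𝒯
  have compat : ∀ A ∈ 𝒯, A ≠ T0 →
      (T0 ⊂ A ∨ A ⊂ T0 ∨ ((∀ v ∈ T0, v ∉ A) ∧ ∀ x ∈ T0, ∀ y ∈ A, ¬ G.Adj x y)) := by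
    intro A hA hAne
    have hAtube := ht.1 A hA
    have hAcase : A ⊂ S ∨ S ⊆ A ∨ ((∀ v ∈ A, v ∉ S) ∧ ∀ x ∈ A, ∀ y ∈ S, ¬ G.Adj x y) := by
      rcases Finset.mem_insert.mp hS with rfl | hS𝒯
      · exact Or.inl (Finset.ssubset_iff_subset_ne.mpr ⟨Finset.subset_univ _, hAtube.2.1⟩)
      · rcases eq_or_ne A S with rfl | hASne
        · exact Or.inr (Or.inl subset_rfl)
        · rcases ht.2 A hA S hS𝒯 hASne with h | h | h
          · exact Or.inl h
          · exact Or.inr (Or.inl h.subset)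
          · exact Or.inr (Or.inr h)
    rcases hAcase with hAS | hSA | hsep
    · -- A is a proper subtube of S, hence avoids r, lies in B
      have hrA : r ∉ A := hr.2 A hA hAS
      have hAB : A ⊆ B := fun x hx => Finset.mem_erase.mpr
        ⟨fun e => hrA (e ▸ hx), hAS.subset hx⟩
      by_cases hmeet : ∃ x ∈ A, x ∈ T0
      · obtain ⟨x, hxA, hxT0⟩ := hmeet
        have hAT0 : A ⊆ T0 := by
          intro y hy
          have : ReachIn G B x y := (tube_conn hAtube x hxA y hy).mono hAB
          exact hclosed x hxT0 y this
        exact Or.inr (Or.inl (Finset.ssubset_iff_subset_ne.mpr ⟨hAT0, hAne⟩))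
      · push_neg at hmeet
        refine Or.inr (Or.inr ⟨fun v hv hvA => hmeet v hvA hv, fun x hx y hy hadj => ?_⟩)
        have : y ∈ T0 := hclosed x hx y (.tail (.refl (hT0B hx)) hadj (hAB hy))
        exact hmeet y hy this
    · exact Or.inl (Finset.ssubset_iff_subset_ne.mpr
        ⟨hT0S.subset.trans hSA, fun e => hrT0 (e ▸ hSA hr.1)⟩)
    · refine Or.inr (Or.inr ⟨fun v hv hvA => hsep.1 v hvA (hT0S.subset hv),
        fun x hx y hy hadj => hsep.2 y hy x (hT0S.subset hx) hadj.symm⟩)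
  -- insert T0 into the tubing
  have htubing : IsTubing G (insert T0 𝒯) := by
    constructor
    · intro T hT
      rcases Finset.mem_insert.mp hT with rfl | hT
      · exact htube0
      · exact ht.1 T hT
    · intro T hT T' hT' hne
      rcases Finset.mem_insert.mp hT with rfl | hT
      · rcases Finset.mem_insert.mp hT' with rfl | hT'
        · exact absurd rfl hne
        · exact compat T' hT' (fun e => hne e.symm)
      · rcases Finset.mem_insert.mp hT' with rfl | hT'
        · rcases compat T hT hne with h | h | h
          · exact Or.inr (Or.inl h)
          · exact Or.inl h
          · exact Or.inr (Or.inr ⟨fun v hv hvT0 => h.1 v hvT0 hv,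
              fun x hx y hy hadj => h.2 y hy x hx hadj.symm⟩)
        · exact ht.2 T hT T' hT' hne
  have := h'.2 (insert T0 𝒯) htubing (Finset.subset_insert _ _)
  exact hT0not (this ▸ Finset.mem_insert_self T0 𝒯)

lemma sum_fw_le {M : Finset (Finset V)} (hne : M.Nonempty) (h1 : ∀ A ∈ M, 1 ≤ A.card) :
    ∑ A ∈ M, fw A.card ≤ fw (∑ A ∈ M, A.card) := by
  induction hne using Finset.Nonempty.cons_induction with
  | singleton A => simp
  | cons A M hAM hMne ih =>
    rw [Finset.sum_cons, Finset.sum_cons]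
    have h1' : ∀ B ∈ M, 1 ≤ B.card := fun B hB => h1 B (Finset.mem_cons_of_mem hB)
    have hM1 : 1 ≤ ∑ B ∈ M, B.card := by
      obtain ⟨B, hB⟩ := hMne
      calc 1 ≤ B.card := h1' B hB
        _ ≤ _ := Finset.single_le_sum (fun _ _ => Nat.zero_le _) hB
    calc fw A.card + ∑ B ∈ M, fw B.card ≤ fw A.card + fw (∑ B ∈ M, B.card) := by
          have := ih h1'; omega
      _ ≤ fw (A.card + ∑ B ∈ M, B.card) :=
          fw_superadd (h1 A (Finset.mem_cons_self _ _)) hM1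

/-- Lower bound for the weight of a root in a maximal tubing. -/
lemma root_weight {𝒯 : Finset (Finset V)} (h' : IsMaxTubing G 𝒯) (hG : G.Connected)
    {w' : V → ℤ} (hw' : IsWeightVector 𝒯 w') {S : Finset V}
    (hS : S ∈ insert Finset.univ 𝒯) {r : V} (hr : IsRoot 𝒯 S r) (h2 : 2 ≤ S.card) :
    fw S.card - fw (S.card - 1) ≤ w' r := by
  classical
  have ht := h'.1
  set M := maxSubs 𝒯 S with hM
  have hcover : S.erase r = M.biUnion id := by
    apply Finset.Subset.antisymm
    · intro x hx
      obtain ⟨hxr, hxS⟩ := Finset.mem_erase.mp hx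
      obtain ⟨A, hA, hAS, hxA⟩ := root_unique_s13 h' hS hr hxS hxr
      obtain ⟨C, hC, hAC⟩ := exists_maxSub hA hAS
      exact Finset.mem_biUnion.mpr ⟨C, hC, hAC hxA⟩
    · intro x hx
      obtain ⟨C, hC, hxC⟩ := Finset.mem_biUnion.mp hx
      obtain ⟨hC𝒯, hCS, _⟩ := maxSubs_mem hC
      exact Finset.mem_erase.mpr ⟨fun e => (hr.2 C hC𝒯 hCS) (e ▸ hxC), hCS.subset hxC⟩
  have hdisj : ∀ C ∈ M, ∀ C' ∈ M, C ≠ C' → Disjoint (id C) (id C') := by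
    intro C hC C' hC' hne
    exact Finset.disjoint_left.mpr (maxSubs_pairwise ht hC hC' hne).1
  have hsum : ∑ v ∈ S.erase r, w' v = ∑ C ∈ M, fw C.card := by
    rw [hcover, Finset.sum_biUnion (fun C hC C' hC' hne => hdisj C hC C' hC' hne)]
    exact Finset.sum_congr rfl fun C hC =>
      sum_tube ht hG hw' (Finset.mem_insert_of_mem (maxSubs_mem hC).1)
  have hcard : ∑ C ∈ M, C.card = S.card - 1 := by
    have : (S.erase r).card = S.card - 1 := Finset.card_erase_of_mem hr.1
    rw [← this, hcover, Finset.card_biUnion hdisj]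
    rfl
  have hMne : M.Nonempty := by
    by_contra hemp
    rw [Finset.not_nonempty_iff_eq_empty] at hemp
    have he : S.erase r = ∅ := by rw [hcover, hemp]; rfl
    have h0 : S.card - 1 = 0 := by
      rw [← Finset.card_erase_of_mem hr.1, he, Finset.card_empty]
    omega
  have h1 : ∀ C ∈ M, 1 ≤ C.card :=
    fun C hC => Finset.card_pos.mpr (ht.1 C (maxSubs_mem hC).1).1
  have hle : ∑ C ∈ M, fw C.card ≤ fw (S.card - 1) := by
    calc ∑ C ∈ M, fw C.card ≤ fw (∑ C ∈ M, C.card) := sum_fw_le hMne h1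
      _ = fw (S.card - 1) := by rw [hcard]
  have heq := (hw' r S hS hr.1 (root_min ht hS hr)).2 h2
  rw [heq, hsum, ← fw_of_two_le h2]
  omega

/-- Existence of the minimal element of `insert univ 𝒯` containing a given
nonempty subset. -/
lemma exists_min_containing {𝒯 : Finset (Finset V)} (ht : IsTubing G 𝒯)
    {T : Finset V} (hTne : T.Nonempty) :
    ∃ S ∈ insert Finset.univ 𝒯, T ⊆ S ∧
      ∀ S' ∈ insert Finset.univ 𝒯, T ⊆ S' → S ⊆ S' := by
  classical
  set cands := (insert Finset.univ 𝒯).filter (fun S => T ⊆ S) with hcands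
  have hcne : cands.Nonempty :=
    ⟨Finset.univ, by simp [hcands]⟩
  obtain ⟨S, hS, hmin⟩ := Finset.exists_min_image cands Finset.card hcne
  simp only [hcands, Finset.mem_filter] at hS
  refine ⟨S, hS.1, hS.2, fun S' hS' hTS' => ?_⟩
  obtain ⟨v, hv⟩ := hTne
  rcases nested_of_mem' ht hS.1 hS' (hS.2 hv) (hTS' hv) with h | h
  · exact h
  · have hcard := hmin S' (by simp [hcands, hS', hTS'])
    have : S' = S := Finset.eq_of_subset_of_card_le h hcard
    exact this ▸ subset_rfl

lemma weight_nonneg {𝒯 : Finset (Finset V)} (h' : IsMaxTubing G 𝒯) (hG : G.Connected)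
    {w' : V → ℤ} (hw' : IsWeightVector 𝒯 w') (v : V) : 0 ≤ w' v := by
  classical
  obtain ⟨S, hS, hvS, hmin⟩ := exists_min_containing h'.1 (T := {v})
    (Finset.singleton_nonempty v)
  have hvS' : v ∈ S := hvS (Finset.mem_singleton_self v)
  have hmin' : ∀ S' ∈ insert Finset.univ 𝒯, v ∈ S' → S ⊆ S' :=
    fun S' hS' hv => hmin S' hS' (Finset.singleton_subset_iff.mpr hv)
  rcases Nat.lt_or_ge S.card 2 with hc | hc
  · have hc1 : S.card = 1 := by
      have := Finset.card_pos.mpr ⟨v, hvS'⟩; omega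
    obtain ⟨x, hx⟩ := Finset.card_eq_one.mp hc1
    subst hx
    have : v = x := by simpa using hvS'
    subst this
    rw [(hw' v {v} hS hvS' hmin').1 rfl]
  · have hroot : IsRoot 𝒯 S v := by
      refine ⟨hvS', fun A hA hAS hvA => ?_⟩
      exact (Finset.ssubset_def.mp hAS).2
        (hmin' A (Finset.mem_insert_of_mem hA) hvA)
    have := root_weight h' hG hw' hS hroot hc
    have hmono : fw (S.card - 1) ≤ fw S.card := fw_mono (by omega)
    omega
theorem weight_sum_monotone
    (G : SimpleGraph V) (hG : G.Connected)
    (𝒯 𝒯' : Finset (Finset V)) (h : IsMaxTubing G 𝒯) (h' : IsMaxTubing G 𝒯')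
    (w w' : V → ℤ) (hw : IsWeightVector 𝒯 w) (hw' : IsWeightVector 𝒯' w') :
    ∀ T ∈ 𝒯,
      (∑ v ∈ T, w v) ≤ (∑ v ∈ T, w' v) ∧
      (T ∈ 𝒯' → ∑ v ∈ T, w v = ∑ v ∈ T, w' v) ∧
      (T ∉ 𝒯' → (∑ v ∈ T, w v) < (∑ v ∈ T, w' v)) := by
  intro T hT
  classical
  have ht := h.1
  have ht' := h'.1
  have hTtube := ht.1 T hT
  have hsumT : ∑ v ∈ T, w v = fw T.card :=
    sum_tube ht hG hw (Finset.mem_insert_of_mem hT)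
  have heqcase : T ∈ 𝒯' → ∑ v ∈ T, w v = ∑ v ∈ T, w' v := by
    intro hT'
    rw [hsumT, sum_tube ht' hG hw' (Finset.mem_insert_of_mem hT')]
  have key : T ∉ 𝒯' → ∑ v ∈ T, w v < ∑ v ∈ T, w' v := by
    intro hnot
    obtain ⟨S, hS, hTS, hmin⟩ := exists_min_containing ht' hTtube.1
    have hTneS : T ≠ S := by
      rintro rfl
      rcases Finset.mem_insert.mp hS with e | e
      · exact hTtube.2.1 e
      · exact hnot e
    have hTS' : T ⊂ S := Finset.ssubset_iff_subset_ne.mpr ⟨hTS, hTneS⟩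
    have htcard : 1 ≤ T.card := Finset.card_pos.mpr hTtube.1
    have hscard : T.card < S.card := Finset.card_lt_card hTS'
    have h2 : 2 ≤ S.card := by omega
    have hSne : S.Nonempty := hTtube.1.mono hTS
    have hSc : Conn G S := by
      rcases Finset.mem_insert.mp hS with rfl | hS𝒯
      · exact conn_univ hG
      · exact tube_conn (ht'.1 S hS𝒯)
    obtain ⟨r, hr⟩ := root_exists ht' hSne hSc
    have hrT : r ∈ T := by
      by_contra hrT
      have hcov : ∀ v ∈ T, ∃ C ∈ maxSubs 𝒯' S, v ∈ C := by
        intro v hv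
        have hvS : v ∈ S := hTS hv
        have hvr : v ≠ r := fun e => hrT (e ▸ hv)
        obtain ⟨A, hA, hAS, hvA⟩ := root_unique_s13 h' hS hr hvS hvr
        obtain ⟨C, hC, hAC⟩ := exists_maxSub hA hAS
        exact ⟨C, hC, hAC hvA⟩
      obtain ⟨C, hC, hTC⟩ := subset_of_sep
        (fun C hC C' hC' => maxSubs_pairwise ht' hC hC')
        hTtube.1 (tube_conn hTtube) hcov
      have := hmin C (Finset.mem_insert_of_mem (maxSubs_mem hC).1) hTC
      exact (Finset.ssubset_def.mp (maxSubs_mem hC).2.1).2 this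
    have hwr := root_weight h' hG hw' hS hr h2
    have hrest : 0 ≤ ∑ v ∈ T.erase r, w' v :=
      Finset.sum_nonneg (fun v _ => weight_nonneg h' hG hw' v)
    have hsplit : ∑ v ∈ T, w' v = w' r + ∑ v ∈ T.erase r, w' v :=
      (Finset.add_sum_erase _ _ hrT).symm
    have hfm : fw T.card ≤ fw (S.card - 1) := fw_mono (by omega)
    have hdl := fw_double_lt h2
    rw [hsumT, hsplit]
    linarith
  refine ⟨?_, heqcase, key⟩
  by_cases hT' : T ∈ 𝒯'
  · exact le_of_eq (heqcase hT')
  · exact le_of_lt (key hT')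
end
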